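/- arXiv:2304.12049 — 6 statements merged into one kernel-verified Lean document; each statement's English description precedes it below -/
import Mathlib

section
/- Let G be a simple graph. Then twice the fractional matching number, 2·μ_f(G), is an integer; that is, there exists a fractional matching f of G attaining μ_f(G) with 2·Σ_{e∈E(G)} f(e) ∈ ℤ and 2·μ_f(G) is an integer. -/
open scoped Classical
open Finset

/-- The spectral radius of a finite simple graph: the largest eigenvalue (as the
supremum of the set of real eigenvalues) of its adjacency matrix over `ℝ`. -/
noncomputable def specRad {V : Type*} [Fintype V] [DecidableEq V] (G : SimpleGraph V) : ℝ :=
  sSup {x : ℝ | Module.End.HasEigenvalue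
    (Matrix.toLin' (Matrix.of fun i j => if G.Adj i j then (1 : ℝ) else 0)) x}

/-- The graph `K_a ∨ (K_b + c·K_1)`: a clique of size `a` joined to the disjoint
union of a clique of size `b` and `c` isolated vertices. -/
def jGraph (a b c : ℕ) : SimpleGraph (Fin (a + b + c)) :=
  SimpleGraph.fromRel (fun x y => (x : ℕ) < a ∨ ((x : ℕ) < a + b ∧ (y : ℕ) < a + b))

/-- `f` is a fractional matching of `G`: `0 ≤ f e ≤ 1` on edges and the sum of `f`
over the edges incident with any vertex is at most `1`. -/
def IsFracMatching {V : Type*} [Fintype V] [DecidableEq V] (G : SimpleGraph V)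
    (f : Sym2 V → ℝ) : Prop :=
  (∀ e ∈ G.edgeFinset, 0 ≤ f e ∧ f e ≤ 1) ∧
    ∀ v : V, ∑ e ∈ G.edgeFinset, (if v ∈ e then f e else 0) ≤ 1

/-- The fractional matching number `μ_f(G)`. -/
noncomputable def fracNu {V : Type*} [Fintype V] [DecidableEq V] (G : SimpleGraph V) : ℝ :=
  sSup {x : ℝ | ∃ f : Sym2 V → ℝ, IsFracMatching G f ∧ x = ∑ e ∈ G.edgeFinset, f e}

/-- `i(G - S)`: the number of isolated vertices of the graph obtained from `G` by
deleting the vertices of `S`. -/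
noncomputable def isoCount {V : Type*} [Fintype V] (G : SimpleGraph V) (S : Finset V) : ℕ :=
  (Finset.univ.filter (fun v => v ∉ S ∧ ∀ u, G.Adj v u → u ∈ S)).card

/-- `G` has a spanning subgraph each of whose connected components is isomorphic
either to `K_2` or to a cycle `C_m` with `m ≥ 3`. -/
def HasK2CycleFactor {V : Type*} (G : SimpleGraph V) : Prop :=
  ∃ H : SimpleGraph V, H ≤ G ∧ ∀ c : H.ConnectedComponent,
    Nonempty (H.induce c.supp ≃g (⊤ : SimpleGraph (Fin 2))) ∨
      ∃ m : ℕ, 3 ≤ m ∧ Nonempty (H.induce c.supp ≃g SimpleGraph.cycleGraph m)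

/-- `G` has a `{K_{1,1}, K_{1,2}, …, K_{1,k}}`-factor: a spanning subgraph each of
whose connected components is a star with between `1` and `k` leaves. -/
def HasStarFactor {V : Type*} (k : ℕ) (G : SimpleGraph V) : Prop :=
  ∃ H : SimpleGraph V, H ≤ G ∧ ∀ c : H.ConnectedComponent,
    ∃ j : ℕ, 1 ≤ j ∧ j ≤ k ∧
      Nonempty (H.induce c.supp ≃g completeBipartiteGraph (Fin 1) (Fin j))

/-- The spectral radius of a real square matrix: the supremum of the moduli of its
complex eigenvalues. -/
noncomputable def matSpecRad {n : ℕ} (A : Matrix (Fin n) (Fin n) ℝ) : ℝ :=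
  sSup {r : ℝ | ∃ μ : ℂ,
    Module.End.HasEigenvalue (Matrix.toLin' (A.map (Complex.ofReal : ℝ → ℂ))) μ ∧
    r = ‖μ‖}

section FracMatchAux

variable {V : Type*} [Fintype V] [DecidableEq V] (G : SimpleGraph V)

lemma vertexSum_eq (f : Sym2 V → ℝ) (v : V) :
    ∑ e ∈ G.edgeFinset, (if v ∈ e then f e else 0)
      = ∑ u ∈ G.neighborFinset v, f s(v, u) := by
  classical
  rw [← Finset.sum_filter]
  have himg : G.edgeFinset.filter (fun e => v ∈ e)
      = (G.neighborFinset v).image (fun u => s(v, u)) := by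
    ext e
    simp only [Finset.mem_filter, Finset.mem_image, SimpleGraph.mem_neighborFinset,
      SimpleGraph.mem_edgeFinset]
    constructor
    · rintro ⟨he, hv⟩
      refine ⟨Sym2.Mem.other hv, ?_, Sym2.other_spec hv⟩
      have h2 := Sym2.other_spec hv
      rw [← h2] at he
      exact (SimpleGraph.mem_edgeSet G).mp he
    · rintro ⟨u, hu, rfl⟩
      exact ⟨(SimpleGraph.mem_edgeSet G).mpr hu, Sym2.mem_mk_left v u⟩
  rw [himg, Finset.sum_image]
  intro x _ y _ h
  exact Sym2.congr_right.mp h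

lemma card_mem_edge {e : Sym2 V} (he : e ∈ G.edgeFinset) :
    (Finset.univ.filter (fun v => v ∈ e)).card = 2 := by
  induction e with
  | _ a b =>
    have hab : a ≠ b := (G.mem_edgeSet.mp (SimpleGraph.mem_edgeFinset.mp he)).ne
    have : Finset.univ.filter (fun v => v ∈ s(a, b)) = {a, b} := by
      ext v; simp [Sym2.mem_iff]
    rw [this, Finset.card_insert_of_notMem (by simp [hab]), Finset.card_singleton]

lemma sum_vertexSum (f : Sym2 V → ℝ) :
    ∑ v, ∑ e ∈ G.edgeFinset, (if v ∈ e then f e else 0) = 2 * ∑ e ∈ G.edgeFinset, f e := by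
  rw [Finset.sum_comm, Finset.mul_sum]
  refine Finset.sum_congr rfl fun e he => ?_
  rw [← Finset.sum_filter, Finset.sum_const, card_mem_edge G he]
  push_cast; ring

lemma card_filter_le (S : Finset V) {e : Sym2 V} (he : e ∈ G.edgeFinset) :
    (S.filter (fun v => v ∈ e)).card
      ≤ (((S.biUnion fun v => G.neighborFinset v)).filter (fun v => v ∈ e)).card := by
  induction e with
  | _ a b =>
    have hadj : G.Adj a b := G.mem_edgeSet.mp (SimpleGraph.mem_edgeFinset.mp he)
    have hab : a ≠ b := hadj.ne
    apply Finset.card_le_card_of_injOn (fun v => if v = a then b else a)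
    · intro v hv
      simp only [Finset.mem_coe, Finset.coe_filter, Set.mem_setOf_eq, Finset.mem_filter, Sym2.mem_iff] at hv
      rcases hv with ⟨hvS, hv⟩
      rcases hv with rfl | rfl
      · beta_reduce; rw [if_pos rfl]
        exact Finset.mem_filter.mpr ⟨Finset.mem_biUnion.mpr
          ⟨v, hvS, (SimpleGraph.mem_neighborFinset G v b).mpr hadj⟩, by simp⟩
      · beta_reduce; rw [if_neg (Ne.symm hab)]
        exact Finset.mem_filter.mpr ⟨Finset.mem_biUnion.mpr
          ⟨v, hvS, (SimpleGraph.mem_neighborFinset G v a).mpr hadj.symm⟩, by simp⟩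
    · intro v hv w hw hvw
      simp only [Finset.coe_filter, Set.mem_setOf_eq, Sym2.mem_iff] at hv hw
      rcases hv.2 with rfl | rfl <;> rcases hw.2 with rfl | rfl <;>
        simp_all [hab, Ne.symm hab]

lemma upper_bound (f : Sym2 V → ℝ) (hf : IsFracMatching G f) (S : Finset V) :
    2 * ∑ e ∈ G.edgeFinset, f e
      ≤ (Fintype.card V : ℝ) - S.card + ((S.biUnion fun v => G.neighborFinset v)).card := by
  rw [← sum_vertexSum]
  have hsplit := Finset.sum_add_sum_compl S (fun v => ∑ e ∈ G.edgeFinset, (if v ∈ e then f e else 0))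
  rw [← hsplit]
  have h1 : ∑ v ∈ Sᶜ, ∑ e ∈ G.edgeFinset, (if v ∈ e then f e else 0)
      ≤ (Sᶜ.card : ℝ) := by
    calc _ ≤ ∑ _v ∈ Sᶜ, (1:ℝ) := Finset.sum_le_sum fun v _ => hf.2 v
    _ = (Sᶜ.card : ℝ) := by simp
  have h2 : ∑ v ∈ S, ∑ e ∈ G.edgeFinset, (if v ∈ e then f e else 0)
      ≤ ∑ v ∈ (S.biUnion fun v => G.neighborFinset v), ∑ e ∈ G.edgeFinset, (if v ∈ e then f e else 0) := by
    rw [Finset.sum_comm, Finset.sum_comm (s := (S.biUnion fun v => G.neighborFinset v))]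
    refine Finset.sum_le_sum fun e he => ?_
    rw [← Finset.sum_filter, ← Finset.sum_filter, Finset.sum_const, Finset.sum_const]
    have hcard := card_filter_le G S he
    have hfe : 0 ≤ f e := (hf.1 e he).1
    simp only [nsmul_eq_mul]
    exact mul_le_mul_of_nonneg_right (by exact_mod_cast hcard) hfe
  have h3 : ∑ v ∈ (S.biUnion fun v => G.neighborFinset v), ∑ e ∈ G.edgeFinset, (if v ∈ e then f e else 0)
      ≤ (((S.biUnion fun v => G.neighborFinset v)).card : ℝ) := by
    calc _ ≤ ∑ _v ∈ (S.biUnion fun v => G.neighborFinset v), (1:ℝ) := Finset.sum_le_sum fun v _ => hf.2 v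
    _ = _ := by simp
  have hc : (Sᶜ.card : ℝ) = (Fintype.card V : ℝ) - S.card := by
    have := Finset.card_add_card_compl S
    have : (S.card : ℝ) + Sᶜ.card = Fintype.card V := by exact_mod_cast this
    linarith
  linarith

lemma nbr_sum_comm (g : V → V → ℝ) :
    ∑ v, ∑ u ∈ G.neighborFinset v, g v u = ∑ v, ∑ u ∈ G.neighborFinset v, g u v := by
  have h : ∀ h : V → V → ℝ, ∑ v, ∑ u ∈ G.neighborFinset v, h v u
      = ∑ v, ∑ u, if G.Adj v u then h v u else 0 := by
    intro h
    refine Finset.sum_congr rfl fun v _ => ?_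
    rw [SimpleGraph.neighborFinset_eq_filter, Finset.sum_filter]
  rw [h, h, Finset.sum_comm]
  refine Finset.sum_congr rfl fun v _ => Finset.sum_congr rfl fun u _ => ?_
  rw [G.adj_comm]

lemma sum_indicator_le_one {α : Type*} (s : Finset α) (P : α → Prop) [DecidablePred P]
    (h : ∀ u ∈ s, ∀ w ∈ s, P u → P w → u = w) :
    ∑ u ∈ s, (if P u then (1:ℝ) else 0) ≤ 1 := by
  rw [Finset.sum_boole]
  have hc : (s.filter P).card ≤ 1 :=
    Finset.card_le_one.mpr fun a ha b hb =>
      h a (Finset.mem_filter.mp ha).1 b (Finset.mem_filter.mp hb).1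
        (Finset.mem_filter.mp ha).2 (Finset.mem_filter.mp hb).2
  exact_mod_cast hc

lemma key : ∃ f : Sym2 V → ℝ, IsFracMatching G f ∧
    (∀ g, IsFracMatching G g → ∑ e ∈ G.edgeFinset, g e ≤ ∑ e ∈ G.edgeFinset, f e) ∧
    ∃ m : ℤ, 2 * ∑ e ∈ G.edgeFinset, f e = (m : ℝ) := by
  classical
  obtain ⟨S₀, -, hS₀⟩ := Finset.exists_max_image (Finset.univ : Finset (Finset V))
    (fun S => (S.card : ℤ) - (((S.biUnion fun v => G.neighborFinset v)).card : ℤ))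
    ⟨∅, Finset.mem_univ _⟩
  set dz : ℤ := (S₀.card : ℤ) - (((S₀.biUnion fun v => G.neighborFinset v)).card : ℤ) with hdz
  have hd0 : 0 ≤ dz := by simpa using hS₀ ∅ (Finset.mem_univ _)
  set d : ℕ := dz.toNat with hdd
  have hdzd : (d : ℤ) = dz := Int.toNat_of_nonneg hd0
  set t : V → Finset (V ⊕ Fin d) := fun u =>
    ((G.neighborFinset u).image Sum.inl) ∪ ((Finset.univ : Finset (Fin d)).image Sum.inr) with ht
  have hall : ∀ A : Finset V, A.card ≤ (A.biUnion t).card := by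
    intro A
    rcases A.eq_empty_or_nonempty with rfl | hA
    · simp
    · have hbi : A.biUnion t = (((A.biUnion fun v => G.neighborFinset v)).image Sum.inl)
          ∪ ((Finset.univ : Finset (Fin d)).image Sum.inr) := by
        ext x
        simp only [ht, Finset.mem_biUnion, Finset.mem_union, Finset.mem_image]
        constructor
        · rintro ⟨u, hu, h | h⟩
          · rcases h with ⟨w, hw, rfl⟩
            exact Or.inl ⟨w, ⟨u, hu, hw⟩, rfl⟩
          · exact Or.inr h
        · rintro (⟨w, ⟨u, hu, hw⟩, rfl⟩ | h)
          · exact ⟨u, hu, Or.inl ⟨w, hw, rfl⟩⟩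
          · exact ⟨hA.choose, hA.choose_spec, Or.inr h⟩
      rw [hbi, Finset.card_union_of_disjoint (by simp [Finset.disjoint_left]),
        Finset.card_image_of_injective _ Sum.inl_injective,
        Finset.card_image_of_injective _ Sum.inr_injective]
      have hAd : (A.card : ℤ) - (((A.biUnion fun v => G.neighborFinset v)).card : ℤ) ≤ dz :=
        hS₀ A (Finset.mem_univ _)
      simp only [Finset.card_univ, Fintype.card_fin]
      omega
  obtain ⟨φ, hφinj, hφmem⟩ := (Finset.all_card_le_biUnion_card_iff_exists_injective t).mp hall
  set fs : Sym2 V → ℝ := Sym2.lift ⟨fun a b =>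
      ((if φ a = Sum.inl b then (1:ℝ) else 0) + (if φ b = Sum.inl a then (1:ℝ) else 0)) / 2,
    fun a b => by dsimp only; rw [add_comm]⟩ with hfs
  have hfsmk : ∀ a b : V, fs s(a, b)
      = ((if φ a = Sum.inl b then (1:ℝ) else 0) + (if φ b = Sum.inl a then (1:ℝ) else 0)) / 2 :=
    fun a b => rfl
  have hinner1 : ∀ v, ∑ u ∈ G.neighborFinset v, fs s(v, u)
      = ((∑ u ∈ G.neighborFinset v, (if φ v = Sum.inl u then (1:ℝ) else 0))
        + ∑ u ∈ G.neighborFinset v, (if φ u = Sum.inl v then (1:ℝ) else 0)) / 2 := by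
    intro v
    rw [← Finset.sum_add_distrib, Finset.sum_div]
    exact Finset.sum_congr rfl fun u _ => hfsmk v u
  have hfrac : IsFracMatching G fs := by
    constructor
    · intro e _
      induction e with
      | _ a b =>
        rw [hfsmk]
        constructor <;> split_ifs <;> norm_num
    · intro v
      rw [vertexSum_eq, hinner1]
      have h1 := sum_indicator_le_one (G.neighborFinset v) (fun u => φ v = Sum.inl u)
        (fun u _ w _ hu hw => Sum.inl.inj (hu.symm.trans hw))
      have h2 := sum_indicator_le_one (G.neighborFinset v) (fun u => φ u = Sum.inl v)
        (fun u _ w _ hu hw => hφinj (hu.trans hw.symm))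
      linarith
  set B : Finset V := Finset.univ.filter (fun u => ∃ w ∈ G.neighborFinset u, φ u = Sum.inl w)
    with hB
  have hinnerB : ∀ v, ∑ u ∈ G.neighborFinset v, (if φ v = Sum.inl u then (1:ℝ) else 0)
      = if v ∈ B then 1 else 0 := by
    intro v
    rw [Finset.sum_boole]
    by_cases hv : v ∈ B
    · rw [if_pos hv]
      rw [hB, Finset.mem_filter] at hv
      obtain ⟨-, w, hw, hww⟩ := hv
      have hfilt : (G.neighborFinset v).filter (fun u => φ v = Sum.inl u) = {w} := by
        ext u
        simp only [Finset.mem_filter, Finset.mem_singleton]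
        constructor
        · rintro ⟨_, he⟩
          exact Sum.inl.inj (he.symm.trans hww)
        · rintro rfl
          exact ⟨hw, hww⟩
      rw [hfilt]; simp
    · rw [if_neg hv]
      have hfilt : (G.neighborFinset v).filter (fun u => φ v = Sum.inl u) = ∅ := by
        rw [Finset.filter_eq_empty_iff]
        intro u hu he
        exact hv (Finset.mem_filter.mpr ⟨Finset.mem_univ _, u, hu, he⟩)
      rw [hfilt]; simp
  have hBval : 2 * ∑ e ∈ G.edgeFinset, fs e = (B.card : ℝ) := by
    rw [← sum_vertexSum]
    have hswap : ∑ v, ∑ u ∈ G.neighborFinset v, (if φ u = Sum.inl v then (1:ℝ) else 0)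
        = ∑ v, ∑ u ∈ G.neighborFinset v, (if φ v = Sum.inl u then (1:ℝ) else 0) :=
      (nbr_sum_comm G fun v u => if φ v = Sum.inl u then (1:ℝ) else 0).symm
    have hBsum : ∑ v, (if v ∈ B then (1:ℝ) else 0) = (B.card : ℝ) := by
      rw [Finset.sum_boole]
      congr 1
      rw [Finset.filter_mem_eq_inter, Finset.univ_inter]
    calc ∑ v, ∑ e ∈ G.edgeFinset, (if v ∈ e then fs e else 0)
        = ∑ v, ∑ u ∈ G.neighborFinset v, fs s(v, u) :=
          Finset.sum_congr rfl fun v _ => vertexSum_eq G fs v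
      _ = ∑ v, ((∑ u ∈ G.neighborFinset v, (if φ v = Sum.inl u then (1:ℝ) else 0))
            + ∑ u ∈ G.neighborFinset v, (if φ u = Sum.inl v then (1:ℝ) else 0)) / 2 :=
          Finset.sum_congr rfl fun v _ => hinner1 v
      _ = ((∑ v, ∑ u ∈ G.neighborFinset v, (if φ v = Sum.inl u then (1:ℝ) else 0))
            + ∑ v, ∑ u ∈ G.neighborFinset v, (if φ u = Sum.inl v then (1:ℝ) else 0)) / 2 := by
          rw [← Finset.sum_add_distrib, ← Finset.sum_div]
      _ = ∑ v, ∑ u ∈ G.neighborFinset v, (if φ v = Sum.inl u then (1:ℝ) else 0) := by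
          rw [hswap]; ring
      _ = ∑ v, (if v ∈ B then (1:ℝ) else 0) := Finset.sum_congr rfl fun v _ => hinnerB v
      _ = (B.card : ℝ) := hBsum
  have hcompl : Bᶜ.card ≤ d := by
    have himg : Bᶜ.image φ ⊆ (Finset.univ : Finset (Fin d)).image Sum.inr := by
      intro x hx
      obtain ⟨u, hu, rfl⟩ := Finset.mem_image.mp hx
      have hm := hφmem u
      rw [ht] at hm
      rcases Finset.mem_union.mp hm with h | h
      · obtain ⟨w, hw, hww⟩ := Finset.mem_image.mp h
        exact absurd (Finset.mem_filter.mpr ⟨Finset.mem_univ _, w, hw, hww.symm⟩)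
          (Finset.mem_compl.mp hu)
      · exact h
    calc Bᶜ.card = (Bᶜ.image φ).card := (Finset.card_image_of_injective _ hφinj).symm
      _ ≤ ((Finset.univ : Finset (Fin d)).image Sum.inr).card := Finset.card_le_card himg
      _ ≤ (Finset.univ : Finset (Fin d)).card := Finset.card_image_le
      _ = d := by simp
  have hcards : B.card + Bᶜ.card = Fintype.card V := Finset.card_add_card_compl B
  have hBd : (Fintype.card V : ℝ) - d ≤ (B.card : ℝ) := by
    have : Fintype.card V ≤ B.card + d := by omega
    have := (Nat.cast_le (α := ℝ)).mpr this
    push_cast at this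
    linarith
  refine ⟨fs, hfrac, ?_, ⟨(B.card : ℤ), by rw [hBval]; norm_num⟩⟩
  intro g hg
  have h1 := upper_bound G g hg S₀
  have hdr : (d : ℝ) = (S₀.card : ℝ) - (((S₀.biUnion fun v => G.neighborFinset v)).card : ℝ) := by
    have : (d : ℤ) = (S₀.card : ℤ) - (((S₀.biUnion fun v => G.neighborFinset v)).card : ℤ) :=
      hdzd.trans hdz
    exact_mod_cast this
  linarith

end FracMatchAux

/-- Twice the fractional matching number is an integer; moreover it is attained by a
fractional matching whose doubled total weight is an integer. -/
theorem stmt1 {V : Type*} [Fintype V] [DecidableEq V] (G : SimpleGraph V) :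
    (∃ f : Sym2 V → ℝ, IsFracMatching G f ∧
      (∑ e ∈ G.edgeFinset, f e) = fracNu G ∧
      ∃ m : ℤ, 2 * ∑ e ∈ G.edgeFinset, f e = (m : ℝ)) ∧
    ∃ m : ℤ, 2 * fracNu G = (m : ℝ) := by
  obtain ⟨f, hf, hmax, m, hm⟩ := key G
  have hmem : (∑ e ∈ G.edgeFinset, f e) ∈
      {x : ℝ | ∃ f' : Sym2 V → ℝ, IsFracMatching G f' ∧ x = ∑ e ∈ G.edgeFinset, f' e} :=
    ⟨f, hf, rfl⟩
  have hub : ∀ x ∈ {x : ℝ | ∃ f' : Sym2 V → ℝ,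
      IsFracMatching G f' ∧ x = ∑ e ∈ G.edgeFinset, f' e}, x ≤ ∑ e ∈ G.edgeFinset, f e := by
    rintro x ⟨g, hg, rfl⟩
    exact hmax g hg
  have hnu : fracNu G = ∑ e ∈ G.edgeFinset, f e := by
    unfold fracNu
    exact le_antisymm (csSup_le ⟨_, hmem⟩ hub) (le_csSup ⟨_, hub⟩ hmem)
  exact ⟨⟨f, hf, hnu.symm, m, hm⟩, m, by rw [hnu]; exact hm⟩
end

section
/- (Tutte) A simple graph G has a spanning subgraph each of whose connected components is isomorphic either to K_2 or to a cycle (of some length at least 3) if and only if i(G−S) ≤ |S| for every vertex subset S ⊆ V(G). -/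
open scoped Classical
open Finset

section TutteAux

variable {V : Type*} [Fintype V] {G : SimpleGraph V}

private lemma fin_succ_iff {M : ℕ} (hM : 2 ≤ M) (a b : Fin M) :
    ((a : ℕ) + 1) % M = (b : ℕ) ↔ (b - a).val = 1 := by
  haveI : NeZero M := ⟨by omega⟩
  have h1 : ((1 : Fin M) : ℕ) = 1 := by rw [Fin.val_one']; exact Nat.mod_eq_of_lt hM
  rw [show ((b - a).val = 1 ↔ b - a = 1) from by rw [Fin.ext_iff, h1],
    sub_eq_iff_eq_add, Fin.ext_iff, Fin.val_add, h1, eq_comm, Nat.add_comm]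

private lemma iso_cond_of_perm (σ : Equiv.Perm V) (hσ : ∀ v, G.Adj v (σ v)) (S : Finset V) :
    isoCount G S ≤ S.card := by
  classical
  rw [isoCount]
  apply Finset.card_le_card_of_injOn (fun v => σ v)
  · intro v hv
    simp only [Finset.mem_coe, Finset.mem_filter] at hv
    exact hv.2.2 _ (hσ v)
  · exact fun a _ b _ h => σ.injective h

private lemma perm_of_iso_cond (h : ∀ S : Finset V, isoCount G S ≤ S.card) :
    ∃ σ : Equiv.Perm V, ∀ v, G.Adj v (σ v) := by
  classical
  have hall : ∀ T : Finset V, T.card ≤ (T.biUnion (fun v => G.neighborFinset v)).card := by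
    intro T
    set N := T.biUnion (fun v => G.neighborFinset v) with hN
    set I := T.filter (fun v => ∀ u ∈ T, ¬ G.Adj v u) with hI
    have hIT : I ⊆ T := Finset.filter_subset _ _
    have h1 : I ⊆ Finset.univ.filter
        (fun v => v ∉ N \ T ∧ ∀ u, G.Adj v u → u ∈ N \ T) := by
      intro v hv
      rw [hI, Finset.mem_filter] at hv
      rw [Finset.mem_filter]
      refine ⟨Finset.mem_univ _, fun hx => (Finset.mem_sdiff.mp hx).2 hv.1, ?_⟩
      intro u hu
      rw [Finset.mem_sdiff]
      constructor
      · rw [hN, Finset.mem_biUnion]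
        exact ⟨v, hv.1, (SimpleGraph.mem_neighborFinset _ _ _).mpr hu⟩
      · intro huT; exact hv.2 u huT hu
    have h2 : I.card ≤ (N \ T).card := le_trans (Finset.card_le_card h1) (h (N \ T))
    have h3 : T \ I ⊆ N ∩ T := by
      intro v hv
      rw [Finset.mem_sdiff, hI, Finset.mem_filter] at hv
      have hvT := hv.1
      have hex : ∃ u ∈ T, G.Adj v u := by
        by_contra hc; push_neg at hc; exact hv.2 ⟨hvT, hc⟩
      obtain ⟨u, huT, hadj⟩ := hex
      rw [Finset.mem_inter]
      refine ⟨?_, hvT⟩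
      rw [hN, Finset.mem_biUnion]
      exact ⟨u, huT, (SimpleGraph.mem_neighborFinset _ _ _).mpr hadj.symm⟩
    calc T.card = (T \ I).card + I.card := (Finset.card_sdiff_add_card_eq_card hIT).symm
      _ ≤ (N ∩ T).card + (N \ T).card := Nat.add_le_add (Finset.card_le_card h3) h2
      _ = N.card := Finset.card_inter_add_card_sdiff N T
  obtain ⟨f, hfinj, hf⟩ := (Finset.all_card_le_biUnion_card_iff_exists_injective
    (fun v => G.neighborFinset v)).mp hall
  exact ⟨Equiv.ofBijective f (Finite.injective_iff_bijective.mp hfinj),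
    fun v => (SimpleGraph.mem_neighborFinset _ _ _).mp (hf v)⟩

private lemma factor_of_perm (σ : Equiv.Perm V) (hσ : ∀ v, G.Adj v (σ v)) :
    HasK2CycleFactor G := by
  classical
  set H : SimpleGraph V := SimpleGraph.fromRel (fun u v => σ u = v) with hH
  have hadj : ∀ u v : V, H.Adj u v ↔ u ≠ v ∧ (σ u = v ∨ σ v = u) := fun u v =>
    SimpleGraph.fromRel_adj _ u v
  have hne : ∀ v : V, σ v ≠ v := fun v => (hσ v).ne'
  have hHG : H ≤ G := by
    intro u v h
    rw [hadj] at h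
    rcases h.2 with h' | h'
    · exact h' ▸ hσ u
    · exact (h' ▸ hσ v).symm
  have hper : ∀ v : V, v ∈ Function.periodicPts σ := by
    intro v
    refine Function.mk_mem_periodicPts (orderOf_pos σ) ?_
    show σ^[orderOf σ] v = v
    rw [Equiv.Perm.iterate_eq_pow, pow_orderOf_eq_one]
    rfl
  have hmpos : ∀ v : V, 0 < Function.minimalPeriod σ v := fun v =>
    Function.minimalPeriod_pos_of_mem_periodicPts (hper v)
  have hm2 : ∀ v : V, 2 ≤ Function.minimalPeriod σ v := by
    intro v
    have h1 : σ^[Function.minimalPeriod σ v] v = v := Function.isPeriodicPt_minimalPeriod σ v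
    have h0 := hmpos v
    by_contra hcon
    have hone : Function.minimalPeriod σ v = 1 := by omega
    rw [hone] at h1
    exact hne v (by simpa using h1)
  have iterEq : ∀ (v : V) (a b : ℕ), σ^[a] v = σ^[b] v ↔
      a % Function.minimalPeriod σ v = b % Function.minimalPeriod σ v := by
    intro v a b
    constructor
    · intro h
      refine (Function.iterate_eq_iterate_iff_of_lt_minimalPeriod
        (Nat.mod_lt _ (hmpos v)) (Nat.mod_lt _ (hmpos v))).mp ?_
      rw [Function.iterate_mod_minimalPeriod_eq, Function.iterate_mod_minimalPeriod_eq, h]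
    · intro h
      rw [← Function.iterate_mod_minimalPeriod_eq (n := a), h,
        Function.iterate_mod_minimalPeriod_eq]
  have reach_iter : ∀ (v : V) (k : ℕ), H.Reachable v (σ^[k] v) := by
    intro v k
    induction k with
    | zero => exact SimpleGraph.Reachable.refl v
    | succ k ih =>
      refine ih.trans (SimpleGraph.Adj.reachable ?_)
      rw [hadj]
      refine ⟨?_, Or.inl (Function.iterate_succ_apply' σ k v).symm⟩
      intro hcon
      apply hne (σ^[k] v)
      rw [← Function.iterate_succ_apply' σ k v, ← hcon]
  have orbit_of_adj : ∀ {x y : V}, H.Adj x y → ∃ k, σ^[k] x = y := by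
    intro x y h
    rw [hadj] at h
    rcases h.2 with h' | h'
    · exact ⟨1, by simpa using h'⟩
    · refine ⟨Function.minimalPeriod σ y - 1, ?_⟩
      have hy : σ^[Function.minimalPeriod σ y] y = y := Function.isPeriodicPt_minimalPeriod σ y
      have hmy : Function.minimalPeriod σ y - 1 + 1 = Function.minimalPeriod σ y :=
        Nat.succ_pred_eq_of_pos (hmpos y)
      calc σ^[Function.minimalPeriod σ y - 1] x
          = σ^[Function.minimalPeriod σ y - 1] (σ y) := by rw [h']
        _ = σ^[Function.minimalPeriod σ y - 1 + 1] y :=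
            (Function.iterate_succ_apply σ _ y).symm
        _ = y := by rw [hmy, hy]
  have walk_orbit : ∀ {x w : V}, H.Walk x w → ∃ k, σ^[k] x = w := by
    intro x w p
    induction p with
    | nil => exact ⟨0, rfl⟩
    | cons h p ih =>
      obtain ⟨k1, hk1⟩ := orbit_of_adj h
      obtain ⟨k2, hk2⟩ := ih
      exact ⟨k2 + k1, by rw [Function.iterate_add_apply, hk1, hk2]⟩
  have supp_eq : ∀ v w : V, w ∈ (H.connectedComponentMk v).supp ↔
      ∃ k : Fin (Function.minimalPeriod σ v), σ^[(k : ℕ)] v = w := by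
    intro v w
    rw [SimpleGraph.ConnectedComponent.mem_supp_iff]
    constructor
    · intro h
      have hr : H.Reachable v w := (SimpleGraph.ConnectedComponent.exact h).symm
      obtain ⟨p⟩ := hr
      obtain ⟨k, hk⟩ := walk_orbit p
      refine ⟨⟨k % Function.minimalPeriod σ v, Nat.mod_lt _ (hmpos v)⟩, ?_⟩
      show σ^[k % Function.minimalPeriod σ v] v = w
      rw [Function.iterate_mod_minimalPeriod_eq]
      exact hk
    · rintro ⟨k, rfl⟩
      exact (SimpleGraph.ConnectedComponent.sound (reach_iter v (k : ℕ))).symm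
  refine ⟨H, hHG, ?_⟩
  intro c
  obtain ⟨v, rfl⟩ := c.exists_rep
  set M : ℕ := Function.minimalPeriod σ v with hM
  have hM2 : 2 ≤ M := hm2 v
  -- the orbit equivalence
  have e_mem : ∀ k : Fin M, σ^[(k : ℕ)] v ∈ (H.connectedComponentMk v).supp := fun k =>
    (supp_eq v _).mpr ⟨k, rfl⟩
  set e : Fin M → (H.connectedComponentMk v).supp := fun k => ⟨σ^[(k : ℕ)] v, e_mem k⟩ with he
  have hebij : Function.Bijective e := by
    constructor
    · intro a b hab
      have h1 : σ^[(a : ℕ)] v = σ^[(b : ℕ)] v := congrArg Subtype.val hab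
      have h2 := (iterEq v a b).mp h1
      rw [Nat.mod_eq_of_lt a.isLt, Nat.mod_eq_of_lt b.isLt] at h2
      exact Fin.ext h2
    · rintro ⟨w, hw⟩
      obtain ⟨k, hk⟩ := (supp_eq v w).mp hw
      exact ⟨k, Subtype.ext hk⟩
  have key : ∀ a b : Fin M, σ (σ^[(a : ℕ)] v) = σ^[(b : ℕ)] v ↔ (b - a).val = 1 := by
    intro a b
    rw [← Function.iterate_succ_apply' σ (a : ℕ) v, iterEq v,
      Nat.mod_eq_of_lt b.isLt, ← fin_succ_iff hM2 a b]
  have hiso : SimpleGraph.cycleGraph M ≃g H.induce (H.connectedComponentMk v).supp := by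
    refine ⟨Equiv.ofBijective e hebij, ?_⟩
    intro a b
    show H.Adj (σ^[(a : ℕ)] v) (σ^[(b : ℕ)] v) ↔ (SimpleGraph.cycleGraph M).Adj a b
    rw [SimpleGraph.cycleGraph_adj', hadj]
    constructor
    · rintro ⟨hne', h | h⟩
      · exact Or.inr ((key a b).mp h)
      · exact Or.inl ((key b a).mp h)
    · intro h
      have hab : a ≠ b := by
        haveI : NeZero M := ⟨by omega⟩
        rintro rfl
        rw [sub_self, or_self] at h
        simp at h
      refine ⟨?_, ?_⟩
      · intro hEq
        apply hab
        have h2 := (iterEq v a b).mp hEq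
        rw [Nat.mod_eq_of_lt a.isLt, Nat.mod_eq_of_lt b.isLt] at h2
        exact Fin.ext h2
      · rcases h with h | h
        · exact Or.inr ((key b a).mpr h)
        · exact Or.inl ((key a b).mpr h)
  rcases Nat.lt_or_ge M 3 with hM3 | hM3
  · have h2 : M = 2 := by omega
    have hn : Nonempty (H.induce (H.connectedComponentMk v).supp ≃g SimpleGraph.cycleGraph M) :=
      ⟨hiso.symm⟩
    rw [h2, SimpleGraph.cycleGraph_two_eq_top] at hn
    exact Or.inl hn
  · exact Or.inr ⟨M, hM3, ⟨hiso.symm⟩⟩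

private lemma perm_of_factor (hfac : HasK2CycleFactor G) :
    ∃ σ : Equiv.Perm V, ∀ v, G.Adj v (σ v) := by
  classical
  obtain ⟨H, hle, hc⟩ := hfac
  have key : ∀ c : H.ConnectedComponent, ∃ g : c.supp → c.supp,
      Function.Bijective g ∧ ∀ x : c.supp, H.Adj (x : V) (g x : V) := by
    intro c
    rcases hc c with ⟨⟨e⟩⟩ | ⟨m, hm, ⟨e⟩⟩
    · refine ⟨fun x => e.symm (e x + 1), ?_, ?_⟩
      · refine Finite.injective_iff_bijective.mp ?_
        intro x y hxy
        exact e.injective (add_right_cancel (e.symm.injective hxy))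
      · intro x
        have h1 : (⊤ : SimpleGraph (Fin 2)).Adj (e x) (e x + 1) := by
          rw [SimpleGraph.top_adj]
          exact (by decide : ∀ a : Fin 2, a ≠ a + 1) (e x)
        have h2 := e.symm.map_adj_iff.mpr h1
        rw [RelIso.symm_apply_apply] at h2
        exact h2
    · obtain ⟨n, rfl⟩ : ∃ n, m = n + 2 := ⟨m - 2, by omega⟩
      refine ⟨fun x => e.symm (e x + 1), ?_, ?_⟩
      · refine Finite.injective_iff_bijective.mp ?_
        intro x y hxy
        exact e.injective (add_right_cancel (e.symm.injective hxy))
      · intro x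
        have h1 : (SimpleGraph.cycleGraph (n + 2)).Adj (e x) (e x + 1) := by
          rw [SimpleGraph.cycleGraph_adj]
          exact Or.inr (add_sub_cancel_left _ _)
        have h2 := e.symm.map_adj_iff.mpr h1
        rw [RelIso.symm_apply_apply] at h2
        exact h2
  choose g hgbij hgadj using key
  have gval : ∀ (c : H.ConnectedComponent) (x : V) (hx : H.connectedComponentMk x = c),
      (g (H.connectedComponentMk x) ⟨x, rfl⟩ : V) = (g c ⟨x, hx⟩ : V) := by
    intro c x hx; subst hx; rfl
  set f : V → V := fun v => (g (H.connectedComponentMk v) ⟨v, rfl⟩ : V) with hf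
  have hfadjH : ∀ v, H.Adj v (f v) := fun v => hgadj (H.connectedComponentMk v) ⟨v, rfl⟩
  have hfadj : ∀ v, G.Adj v (f v) := fun v => hle (hfadjH v)
  have hfinj : Function.Injective f := by
    intro u w huw
    have hu : H.connectedComponentMk u = H.connectedComponentMk (f u) :=
      SimpleGraph.ConnectedComponent.connectedComponentMk_eq_of_adj (hfadjH u)
    have hw : H.connectedComponentMk w = H.connectedComponentMk u := by
      rw [SimpleGraph.ConnectedComponent.connectedComponentMk_eq_of_adj (hfadjH w), ← huw, ← hu]
    have h2 : (g (H.connectedComponentMk u) ⟨u, rfl⟩ : V) =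
        (g (H.connectedComponentMk u) ⟨w, hw⟩ : V) := by
      have huw' : (g (H.connectedComponentMk u) ⟨u, rfl⟩ : V) =
          (g (H.connectedComponentMk w) ⟨w, rfl⟩ : V) := huw
      exact huw'.trans (gval _ w hw)
    have h3 := (hgbij (H.connectedComponentMk u)).injective (Subtype.ext h2)
    exact congrArg Subtype.val h3
  exact ⟨Equiv.ofBijective f (Finite.injective_iff_bijective.mp hfinj), hfadj⟩

theorem stmt5' : HasK2CycleFactor G ↔ ∀ S : Finset V, isoCount G S ≤ S.card := by
  constructor
  · intro hfac S
    obtain ⟨σ, hσ⟩ := perm_of_factor hfac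
    exact iso_cond_of_perm σ hσ S
  · intro h
    obtain ⟨σ, hσ⟩ := perm_of_iso_cond h
    exact factor_of_perm σ hσ

end TutteAux

/-- Tutte's theorem: `G` has a `{K_2, cycles}`-factor if and only if
`i(G−S) ≤ |S|` for every vertex subset `S`. -/
theorem stmt5 {V : Type*} [Fintype V] (G : SimpleGraph V) :
    HasK2CycleFactor G ↔ ∀ S : Finset V, isoCount G S ≤ S.card :=
  stmt5'
end

section
/- Let δ ≥ 0 be an integer and let n ≥ 5δ+6. Then for every integer s with δ+1 ≤ s ≤ (n−1)/2, ρ(K_s ∨ (K_{n−2s−1} + (s+1)K_1)) < ρ(K_δ ∨ (K_{n−2δ−1} + (δ+1)K_1)). -/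
open scoped Classical
open Finset

/-- Collatz–Wielandt upper bound. -/
lemma cw_upper {k : ℕ} (A : Matrix (Fin k) (Fin k) ℝ) (hA : ∀ i j, 0 ≤ A i j)
    (X : Fin k → ℝ) (hX : ∀ v, 0 < X v) (c : ℝ)
    (hc : ∀ v, ∑ u, A v u * X u ≤ c * X v)
    {μ : ℝ} (hμ : Module.End.HasEigenvalue (Matrix.toLin' A) μ) : μ ≤ c := by
  obtain ⟨f, hf⟩ := hμ.exists_hasEigenvector
  have hfe : ∀ v, ∑ u, A v u * f u = μ * f v := by
    intro v
    have h1 : Matrix.toLin' A f = μ • f := Module.End.mem_eigenspace_iff.mp hf.1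
    have h2 := congrFun h1 v
    simpa [Matrix.toLin'_apply, Matrix.mulVec, dotProduct] using h2
  obtain ⟨w, hw⟩ : ∃ w, f w ≠ 0 := by
    by_contra hcon
    push_neg at hcon
    exact hf.2 (funext hcon)
  obtain ⟨v0, -, hv0⟩ := Finset.exists_max_image Finset.univ (fun v => |f v| / X v)
    ⟨w, Finset.mem_univ w⟩
  have hqpos : 0 < |f v0| / X v0 :=
    lt_of_lt_of_le (div_pos (abs_pos.mpr hw) (hX w)) (hv0 w (Finset.mem_univ w))
  set q := |f v0| / X v0 with hq
  have hfle : ∀ u, |f u| ≤ q * X u := by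
    intro u
    have := hv0 u (Finset.mem_univ u)
    calc |f u| = |f u| / X u * X u := (div_mul_cancel₀ _ (hX u).ne').symm
    _ ≤ q * X u := mul_le_mul_of_nonneg_right this (hX u).le
  have hqX : q * X v0 = |f v0| := by
    rw [hq]; exact div_mul_cancel₀ _ (hX v0).ne'
  have key : |μ| * |f v0| ≤ c * |f v0| := by
    calc |μ| * |f v0| = |μ * f v0| := (abs_mul μ (f v0)).symm
      _ = |∑ u, A v0 u * f u| := by rw [hfe v0]
      _ ≤ ∑ u, |A v0 u * f u| := Finset.abs_sum_le_sum_abs _ _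
      _ ≤ ∑ u, A v0 u * (q * X u) := by
          refine Finset.sum_le_sum fun u _ => ?_
          rw [abs_mul, abs_of_nonneg (hA v0 u)]
          exact mul_le_mul_of_nonneg_left (hfle u) (hA v0 u)
      _ = q * ∑ u, A v0 u * X u := by rw [Finset.mul_sum]; exact Finset.sum_congr rfl fun u _ => by ring
      _ ≤ q * (c * X v0) := mul_le_mul_of_nonneg_left (hc v0) hqpos.le
      _ = c * (q * X v0) := by ring
      _ = c * |f v0| := by rw [hqX]
  have hfv0 : 0 < |f v0| := by rw [← hqX]; exact mul_pos hqpos (hX v0)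
  exact (le_abs_self μ).trans (le_of_mul_le_mul_right key hfv0)

/-- Transfer of eigenvalues between `toEuclideanLin` and `toLin'`. -/
lemma eigen_transfer {k : ℕ} (A : Matrix (Fin k) (Fin k) ℝ) (μ : ℝ) :
    Module.End.HasEigenvalue (Matrix.toEuclideanLin A) μ →
      Module.End.HasEigenvalue (Matrix.toLin' A) μ := by
  intro h
  obtain ⟨v, hv⟩ := h.exists_hasEigenvector
  have h1 : Matrix.toEuclideanLin A v = μ • v := Module.End.mem_eigenspace_iff.mp hv.1
  refine Module.End.hasEigenvalue_of_hasEigenvector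
    (x := (WithLp.equiv 2 (Fin k → ℝ)) v) ⟨Module.End.mem_eigenspace_iff.mpr ?_, ?_⟩
  · calc Matrix.toLin' A ((WithLp.equiv 2 (Fin k → ℝ)) v)
        = (WithLp.equiv 2 (Fin k → ℝ)) (Matrix.toEuclideanLin A v) :=
          (Matrix.piLp_ofLp_toEuclideanLin A v).symm
      _ = μ • (WithLp.equiv 2 (Fin k → ℝ)) v := by rw [h1]; rfl
  · intro h0
    apply hv.2
    have := congrArg (WithLp.equiv 2 (Fin k → ℝ)).symm h0
    simpa using this

/-- Rayleigh-quotient lower bound: a symmetric nonneg-certified vector gives an eigenvalue ≥ c. -/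
lemma rayleigh_lower {k : ℕ} (A : Matrix (Fin k) (Fin k) ℝ)
    (hsym : A.IsHermitian) (Y : Fin k → ℝ) (hY : ∀ v, 0 ≤ Y v) (hY0 : Y ≠ 0) (c : ℝ)
    (hc : ∀ v, c * Y v ≤ ∑ u, A v u * Y u) :
    ∃ μ, Module.End.HasEigenvalue (Matrix.toLin' A) μ ∧ c ≤ μ := by
  set E := EuclideanSpace ℝ (Fin k)
  set YE : E := (WithLp.equiv 2 (Fin k → ℝ)).symm Y with hYE
  have hYE0 : YE ≠ 0 := by
    intro h0
    apply hY0
    have := congrArg (WithLp.equiv 2 (Fin k → ℝ)) h0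
    exact this
  haveI : Nontrivial E := nontrivial_of_ne YE 0 hYE0
  set T : E →ₗ[ℝ] E := Matrix.toEuclideanLin A with hT
  have hTsym : T.IsSymmetric := Matrix.isHermitian_iff_isSymmetric.mp hsym
  have hev := hTsym.hasEigenvalue_iSup_of_finiteDimensional
  refine ⟨_, eigen_transfer A _ hev, ?_⟩
  -- now c ≤ iSup of Rayleigh quotients
  set T' := LinearMap.toContinuousLinearMap T with hT'
  have hbdd : BddAbove (Set.range fun x : {x : E // x ≠ 0} =>
      RCLike.re (inner ℝ (T x) (x : E) : ℝ) / ‖(x : E)‖ ^ 2) := by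
    refine ⟨‖T'‖, ?_⟩
    rintro _ ⟨x, rfl⟩
    have hx0 : (0:ℝ) < ‖(x:E)‖ := norm_pos_iff.mpr x.2
    have hx : (0:ℝ) < ‖(x:E)‖ ^ 2 := by positivity
    rw [div_le_iff₀ hx]
    have h1 : (inner ℝ (T x) (x : E) : ℝ) ≤ ‖T (x:E)‖ * ‖(x:E)‖ := real_inner_le_norm _ _
    have h2 : ‖T (x:E)‖ ≤ ‖T'‖ * ‖(x:E)‖ := by
      have := T'.le_opNorm (x:E)
      simpa [hT'] using this
    have h3 : RCLike.re (inner ℝ (T x) (x : E) : ℝ) = (inner ℝ (T x) (x : E) : ℝ) := rfl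
    rw [h3]
    nlinarith [norm_nonneg (x:E), norm_nonneg (T (x:E))]
  have hmem := le_ciSup hbdd (⟨YE, hYE0⟩ : {x : E // x ≠ 0})
  refine le_trans ?_ hmem
  -- compute the Rayleigh quotient of YE
  have hTY : T YE = (WithLp.equiv 2 (Fin k → ℝ)).symm (A.mulVec Y) := by
    rw [hT, hYE]
    exact Matrix.toEuclideanLin_apply_piLp_toLp A Y
  have hinner : (inner ℝ (T YE) (YE : E) : ℝ) = ∑ v, (∑ u, A v u * Y u) * Y v := by
    rw [hTY, hYE, PiLp.inner_apply]
    refine Finset.sum_congr rfl fun v _ => ?_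
    simp [PiLp.toLp_apply, Matrix.mulVec, dotProduct,
      RCLike.inner_apply, conj_trivial, mul_comm]
  have hnorm : ‖YE‖ ^ 2 = ∑ v, Y v * Y v := by
    rw [← real_inner_self_eq_norm_sq, PiLp.inner_apply]
    refine Finset.sum_congr rfl fun v _ => ?_
    simp [hYE, PiLp.toLp_apply, RCLike.inner_apply, conj_trivial, sq]
  have hpos : 0 < ∑ v, Y v * Y v := by
    obtain ⟨w, hw⟩ : ∃ w, Y w ≠ 0 := by
      by_contra hcon; push_neg at hcon; exact hY0 (funext hcon)
    exact lt_of_lt_of_le (mul_self_pos.mpr hw)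
      (Finset.single_le_sum (f := fun v => Y v * Y v)
        (fun i _ => mul_self_nonneg _) (Finset.mem_univ w))
  show c ≤ RCLike.re (inner ℝ (T YE) (YE : E) : ℝ) / ‖YE‖ ^ 2
  have h3 : RCLike.re (inner ℝ (T YE) (YE : E) : ℝ) = (inner ℝ (T YE) (YE : E) : ℝ) := rfl
  rw [h3, hinner, hnorm, le_div_iff₀ hpos]
  calc c * ∑ v, Y v * Y v = ∑ v, c * Y v * Y v := by
        rw [Finset.mul_sum]; exact Finset.sum_congr rfl fun v _ => by ring
    _ ≤ ∑ v, (∑ u, A v u * Y u) * Y v :=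
        Finset.sum_le_sum fun v _ => by
          have := mul_le_mul_of_nonneg_right (hc v) (hY v)
          linarith
    _ = ∑ v, (∑ u, A v u * Y u) * Y v := rfl

lemma jGraph_adj (a b c : ℕ) (v u : Fin (a+b+c)) :
    (jGraph a b c).Adj v u ↔ v ≠ u ∧
      ((v:ℕ) < a ∨ (u:ℕ) < a ∨ ((v:ℕ) < a+b ∧ (u:ℕ) < a+b)) := by
  simp only [jGraph, SimpleGraph.fromRel_adj]
  constructor
  · rintro ⟨hne, h⟩; exact ⟨hne, by tauto⟩
  · rintro ⟨hne, h⟩; exact ⟨hne, by tauto⟩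

lemma sum_piece (lo hi : ℕ) (f : ℕ → ℝ) (x : ℝ) (h : ∀ i, lo ≤ i → i < hi → f i = x) :
    ∑ i ∈ Finset.Ico lo hi, f i = ((hi - lo : ℕ) : ℝ) * x := by
  rw [Finset.sum_congr rfl fun i hi' => h i (Finset.mem_Ico.mp hi').1 (Finset.mem_Ico.mp hi').2,
    Finset.sum_const, Nat.card_Ico, nsmul_eq_mul]

lemma sum_master (a b c : ℕ) (f : ℕ → ℝ) :
    ∑ u : Fin (a+b+c), f (u:ℕ) =
      ∑ i ∈ Finset.Ico 0 a, f i + ∑ i ∈ Finset.Ico a (a+b), f i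
        + ∑ i ∈ Finset.Ico (a+b) (a+b+c), f i := by
  rw [Fin.sum_univ_eq_sum_range, Finset.range_eq_Ico,
    ← Finset.sum_Ico_consecutive f (Nat.zero_le (a+b)) (Nat.le_add_right _ _),
    ← Finset.sum_Ico_consecutive f (Nat.zero_le a) (Nat.le_add_right _ _)]

/-- The key mulVec computation for the three-class graph. -/
lemma jSum (a b c : ℕ) (x1 x2 x3 : ℝ) (v : Fin (a+b+c)) :
    ∑ u, (if (jGraph a b c).Adj v u then (1:ℝ) else 0) *
        (if (u:ℕ) < a then x1 else if (u:ℕ) < a+b then x2 else x3) =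
      if (v:ℕ) < a then (a:ℝ)*x1 + (b:ℝ)*x2 + (c:ℝ)*x3 - x1
      else if (v:ℕ) < a+b then (a:ℝ)*x1 + (b:ℝ)*x2 - x2
      else (a:ℝ)*x1 := by
  set g : ℕ → ℝ := fun i => if i < a then x1 else if i < a+b then x2 else x3 with hg
  have cast1 : ((a - 0 : ℕ) : ℝ) = (a:ℝ) := by norm_num
  have cast2 : ((a + b - a : ℕ) : ℝ) = (b:ℝ) := by simp
  have cast3 : ((a + b + c - (a+b) : ℕ) : ℝ) = (c:ℝ) := by simp
  have T1 : ∑ u : Fin (a+b+c), g (u:ℕ) = (a:ℝ)*x1 + (b:ℝ)*x2 + (c:ℝ)*x3 := by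
    rw [sum_master a b c g,
      sum_piece 0 a g x1 (fun i _ h2 => by simp [hg, h2]),
      sum_piece a (a+b) g x2 (fun i h1 h2 => by simp [hg, h2, Nat.not_lt.mpr h1, not_lt_of_ge (le_trans h1 (le_refl i))]),
      sum_piece (a+b) (a+b+c) g x3 (fun i h1 _ => by
        have h3 : ¬ i < a := by omega
        have h4 : ¬ i < a + b := by omega
        simp [hg, h3, h4]),
      cast1, cast2, cast3]
  have T2 : ∑ u : Fin (a+b+c), (if (u:ℕ) < a+b then g (u:ℕ) else 0) = (a:ℝ)*x1 + (b:ℝ)*x2 := by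
    rw [sum_master a b c (fun i => if i < a+b then g i else 0)]
    rw [sum_piece 0 a _ x1 (fun i _ h2 => by
        have : i < a + b := by omega
        simp [hg, h2, this]),
      sum_piece a (a+b) _ x2 (fun i h1 h2 => by
        have h3 : ¬ i < a := by omega
        simp [hg, h2, h3]),
      sum_piece (a+b) (a+b+c) _ 0 (fun i h1 _ => by
        have h4 : ¬ i < a + b := by omega
        simp [h4]),
      cast1, cast2]
    ring
  have T3 : ∑ u : Fin (a+b+c), (if (u:ℕ) < a then g (u:ℕ) else 0) = (a:ℝ)*x1 := by
    rw [sum_master a b c (fun i => if i < a then g i else 0)]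
    rw [sum_piece 0 a _ x1 (fun i _ h2 => by simp [hg, h2]),
      sum_piece a (a+b) _ 0 (fun i h1 _ => by
        have h3 : ¬ i < a := by omega
        simp [h3]),
      sum_piece (a+b) (a+b+c) _ 0 (fun i h1 _ => by
        have h3 : ¬ i < a := by omega
        simp [h3]),
      cast1]
    ring
  have Tdiag : ∑ u : Fin (a+b+c), (if u = v then g (u:ℕ) else 0) = g (v:ℕ) := by
    rw [Finset.sum_ite_eq' Finset.univ v (fun u : Fin (a+b+c) => g (u:ℕ))]
    simp
  by_cases hva : (v:ℕ) < a
  · have hpt : ∀ u : Fin (a+b+c),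
        (if (jGraph a b c).Adj v u then (1:ℝ) else 0) * g (u:ℕ)
          = g (u:ℕ) - (if u = v then g (u:ℕ) else 0) := by
      intro u
      by_cases huv : u = v
      · subst huv
        simp [SimpleGraph.irrefl]
      · have : (jGraph a b c).Adj v u := by
          rw [jGraph_adj]
          exact ⟨fun h => huv h.symm, Or.inl hva⟩
        simp [this, huv]
    calc ∑ u, (if (jGraph a b c).Adj v u then (1:ℝ) else 0) * g (u:ℕ)
        = ∑ u : Fin (a+b+c), (g (u:ℕ) - (if u = v then g (u:ℕ) else 0)) :=
          Finset.sum_congr rfl fun u _ => hpt u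
      _ = (a:ℝ)*x1 + (b:ℝ)*x2 + (c:ℝ)*x3 - g (v:ℕ) := by
          rw [Finset.sum_sub_distrib, T1, Tdiag]
      _ = _ := by simp [hg, hva]
  · by_cases hvb : (v:ℕ) < a+b
    · have hpt : ∀ u : Fin (a+b+c),
          (if (jGraph a b c).Adj v u then (1:ℝ) else 0) * g (u:ℕ)
            = (if (u:ℕ) < a+b then g (u:ℕ) else 0) - (if u = v then g (u:ℕ) else 0) := by
        intro u
        by_cases huv : u = v
        · subst huv
          simp [SimpleGraph.irrefl, hvb]
        · by_cases hub : (u:ℕ) < a+b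
          · have : (jGraph a b c).Adj v u := by
              rw [jGraph_adj]
              exact ⟨fun h => huv h.symm, Or.inr (Or.inr ⟨hvb, hub⟩)⟩
            simp [this, huv, hub]
          · have : ¬ (jGraph a b c).Adj v u := by
              rw [jGraph_adj]
              rintro ⟨-, h | h | ⟨-, h⟩⟩ <;> omega
            simp [this, huv, hub]
      calc ∑ u, (if (jGraph a b c).Adj v u then (1:ℝ) else 0) * g (u:ℕ)
          = ∑ u : Fin (a+b+c),
              ((if (u:ℕ) < a+b then g (u:ℕ) else 0) - (if u = v then g (u:ℕ) else 0)) :=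
            Finset.sum_congr rfl fun u _ => hpt u
        _ = (a:ℝ)*x1 + (b:ℝ)*x2 - g (v:ℕ) := by
            rw [Finset.sum_sub_distrib, T2, Tdiag]
        _ = _ := by simp [hg, hva, hvb]
    · have hpt : ∀ u : Fin (a+b+c),
          (if (jGraph a b c).Adj v u then (1:ℝ) else 0) * g (u:ℕ)
            = (if (u:ℕ) < a then g (u:ℕ) else 0) := by
        intro u
        by_cases huv : u = v
        · subst huv
          have : ¬ (u:ℕ) < a := hva
          simp [SimpleGraph.irrefl, this]
        · by_cases hua : (u:ℕ) < a
          · have : (jGraph a b c).Adj v u := by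
              rw [jGraph_adj]
              exact ⟨fun h => huv h.symm, Or.inr (Or.inl hua)⟩
            simp [this, hua]
          · have : ¬ (jGraph a b c).Adj v u := by
              rw [jGraph_adj]
              rintro ⟨-, h | h | ⟨h, -⟩⟩ <;> omega
            simp [this, hua]
      calc ∑ u, (if (jGraph a b c).Adj v u then (1:ℝ) else 0) * g (u:ℕ)
          = ∑ u : Fin (a+b+c), (if (u:ℕ) < a then g (u:ℕ) else 0) :=
            Finset.sum_congr rfl fun u _ => hpt u
        _ = (a:ℝ)*x1 := T3
        _ = _ := by simp [hva, hvb]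

lemma specRad_lt_of_cert (a b c : ℕ) {t x1 x2 x3 : ℝ}
    (hx1 : 0 < x1) (hx2 : 0 < x2) (hx3 : 0 < x3) (ht : 0 < t)
    (h1 : (a:ℝ)*x1 + (b:ℝ)*x2 + (c:ℝ)*x3 - x1 < t*x1)
    (h2 : (a:ℝ)*x1 + (b:ℝ)*x2 - x2 < t*x2)
    (h3 : (a:ℝ)*x1 < t*x3) :
    specRad (jGraph a b c) < t := by
  set A : Matrix (Fin (a+b+c)) (Fin (a+b+c)) ℝ :=
    Matrix.of fun i j => if (jGraph a b c).Adj i j then (1:ℝ) else 0 with hA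
  set X : Fin (a+b+c) → ℝ :=
    fun u => if (u:ℕ) < a then x1 else if (u:ℕ) < a+b then x2 else x3 with hX
  set t' : ℝ := max (max (((a:ℝ)*x1 + (b:ℝ)*x2 + (c:ℝ)*x3 - x1)/x1)
    (((a:ℝ)*x1 + (b:ℝ)*x2 - x2)/x2)) (((a:ℝ)*x1)/x3) with ht'def
  have htlt : t' < t := by
    apply max_lt (max_lt ?_ ?_) ?_
    · rw [div_lt_iff₀ hx1]; linarith
    · rw [div_lt_iff₀ hx2]; linarith
    · rw [div_lt_iff₀ hx3]; linarith
  have hrows : ∀ v, ∑ u, A v u * X u ≤ t' * X v := by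
    intro v
    have hj := jSum a b c x1 x2 x3 v
    have hLHS : ∑ u, A v u * X u =
        ∑ u, (if (jGraph a b c).Adj v u then (1:ℝ) else 0) *
          (if (u:ℕ) < a then x1 else if (u:ℕ) < a+b then x2 else x3) := rfl
    rw [hLHS, hj, hX]
    by_cases hva : (v:ℕ) < a
    · simp only [hva, if_true]
      exact (div_le_iff₀ hx1).mp (le_trans (le_max_left _ _) (le_max_left _ _))
    · by_cases hvb : (v:ℕ) < a+b
      · simp only [hva, hvb, if_true, if_false]
        exact (div_le_iff₀ hx2).mp (le_trans (le_max_right _ _) (le_max_left _ _))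
      · simp only [hva, hvb, if_false]
        exact (div_le_iff₀ hx3).mp (le_max_right _ _)
  have hub : ∀ μ ∈ {x : ℝ | Module.End.HasEigenvalue (Matrix.toLin' A) x}, μ ≤ t' := by
    intro μ hμ
    refine cw_upper A (fun i j => ?_) X (fun u => ?_) t' hrows hμ
    · show (0:ℝ) ≤ if (jGraph a b c).Adj i j then (1:ℝ) else 0
      split <;> norm_num
    · rw [hX]
      dsimp only
      split
      · exact hx1
      · split
        · exact hx2
        · exact hx3
  show sSup {x : ℝ | Module.End.HasEigenvalue (Matrix.toLin' A) x} < t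
  rcases Set.eq_empty_or_nonempty
    {x : ℝ | Module.End.HasEigenvalue (Matrix.toLin' A) x} with he | hne
  · rw [he, Real.sSup_empty]; exact ht
  · exact lt_of_le_of_lt (csSup_le hne hub) htlt

lemma le_specRad_of_cert (a b c : ℕ) (hb : 0 < b) {t y1 y2 y3 : ℝ}
    (hy1 : 0 ≤ y1) (hy2 : 0 < y2) (hy3 : 0 ≤ y3)
    (h1 : t*y1 ≤ (a:ℝ)*y1 + (b:ℝ)*y2 + (c:ℝ)*y3 - y1)
    (h2 : t*y2 ≤ (a:ℝ)*y1 + (b:ℝ)*y2 - y2)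
    (h3 : t*y3 ≤ (a:ℝ)*y1) :
    t ≤ specRad (jGraph a b c) := by
  set A : Matrix (Fin (a+b+c)) (Fin (a+b+c)) ℝ :=
    Matrix.of fun i j => if (jGraph a b c).Adj i j then (1:ℝ) else 0 with hA
  set Y : Fin (a+b+c) → ℝ :=
    fun u => if (u:ℕ) < a then y1 else if (u:ℕ) < a+b then y2 else y3 with hY
  have hsym : A.IsHermitian := by
    ext i j
    show star (A j i) = A i j
    have : (jGraph a b c).Adj j i ↔ (jGraph a b c).Adj i j := ⟨fun h => h.symm, fun h => h.symm⟩
    simp only [hA, Matrix.of_apply, star_trivial, this]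
  have hYnn : ∀ v, 0 ≤ Y v := by
    intro v
    rw [hY]; dsimp only
    split
    · exact hy1
    · split
      · exact hy2.le
      · exact hy3
  have hY0 : Y ≠ 0 := by
    intro h0
    have hlt : a < a + b + c := by omega
    have := congrFun h0 (⟨a, hlt⟩ : Fin (a+b+c))
    rw [hY] at this
    simp only [Pi.zero_apply] at this
    have h2' : ¬ (a < a) := lt_irrefl a
    have h3' : a < a + b := by omega
    rw [if_neg h2', if_pos h3'] at this
    exact hy2.ne' this
  have hrows : ∀ v, t * Y v ≤ ∑ u, A v u * Y u := by
    intro v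
    have hj := jSum a b c y1 y2 y3 v
    have hLHS : ∑ u, A v u * Y u =
        ∑ u, (if (jGraph a b c).Adj v u then (1:ℝ) else 0) *
          (if (u:ℕ) < a then y1 else if (u:ℕ) < a+b then y2 else y3) := rfl
    rw [hLHS, hj, hY]
    by_cases hva : (v:ℕ) < a
    · simp only [hva, if_true]; exact h1
    · by_cases hvb : (v:ℕ) < a+b
      · simp only [hva, hvb, if_true, if_false]; exact h2
      · simp only [hva, hvb, if_false]; exact h3
  obtain ⟨μ, hμev, hμge⟩ := rayleigh_lower A hsym Y hYnn hY0 t hrows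
  have hbdd : BddAbove {x : ℝ | Module.End.HasEigenvalue (Matrix.toLin' A) x} := by
    refine ⟨((a+b+c : ℕ):ℝ), fun μ' hμ' => ?_⟩
    refine cw_upper A (fun i j => ?_) (fun _ => 1) (fun _ => one_pos) _ (fun v => ?_) hμ'
    · show (0:ℝ) ≤ if (jGraph a b c).Adj i j then (1:ℝ) else 0
      split <;> norm_num
    · calc ∑ u, A v u * 1 ≤ ∑ _u : Fin (a+b+c), (1:ℝ) := by
            refine Finset.sum_le_sum fun u _ => ?_
            show (if (jGraph a b c).Adj v u then (1:ℝ) else 0) * 1 ≤ 1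
            split <;> norm_num
        _ = ((a+b+c : ℕ):ℝ) * 1 := by simp
  exact le_trans hμge (le_csSup hbdd hμev)

set_option maxHeartbeats 2000000 in
/-- For `n ≥ 5δ+6` and every integer `s` with `δ+1 ≤ s ≤ (n−1)/2`,
`ρ(K_s ∨ (K_{n−2s−1} + (s+1)K_1)) < ρ(K_δ ∨ (K_{n−2δ−1} + (δ+1)K_1))`. -/
theorem stmt12 (δ n : ℕ) (hn : 5 * δ + 6 ≤ n)
    (s : ℕ) (hs1 : δ + 1 ≤ s) (hs2 : 2 * s + 1 ≤ n) :
    specRad (jGraph s (n - 2 * s - 1) (s + 1)) <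
      specRad (jGraph δ (n - 2 * δ - 1) (δ + 1)) := by
  have hd0 : (0:ℝ) ≤ (δ:ℝ) := Nat.cast_nonneg δ
  have hn5 : 5*(δ:ℝ) + 6 ≤ (n:ℝ) := by exact_mod_cast hn
  have hs1' : (δ:ℝ) + 1 ≤ (s:ℝ) := by exact_mod_cast hs1
  have hs2' : 2*(s:ℝ) + 1 ≤ (n:ℝ) := by exact_mod_cast hs2
  -- the root r of the characteristic cubic of the quotient matrix of the δ-graph
  have hNle : (n:ℝ) - (δ:ℝ) - 2 ≤ (n:ℝ) - 2 := by linarith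
  have hcont : ContinuousOn (fun x : ℝ => x^3 - ((n:ℝ)-(δ:ℝ)-3)*x^2 - ((n:ℝ)+(δ:ℝ)^2-2)*x
      + (δ:ℝ)*((δ:ℝ)+1)*((n:ℝ)-2*(δ:ℝ)-2)) (Set.Icc ((n:ℝ)-(δ:ℝ)-2) ((n:ℝ)-2)) := by
    apply Continuous.continuousOn
    fun_prop
  have hlow : (fun x : ℝ => x^3 - ((n:ℝ)-(δ:ℝ)-3)*x^2 - ((n:ℝ)+(δ:ℝ)^2-2)*x
      + (δ:ℝ)*((δ:ℝ)+1)*((n:ℝ)-2*(δ:ℝ)-2)) ((n:ℝ)-(δ:ℝ)-2) ≤ 0 := by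
    have hid : (fun x : ℝ => x^3 - ((n:ℝ)-(δ:ℝ)-3)*x^2 - ((n:ℝ)+(δ:ℝ)^2-2)*x
        + (δ:ℝ)*((δ:ℝ)+1)*((n:ℝ)-2*(δ:ℝ)-2)) ((n:ℝ)-(δ:ℝ)-2)
        = -((δ:ℝ)^2*((δ:ℝ)+1)) := by ring
    rw [hid]
    nlinarith [sq_nonneg (δ:ℝ)]
  have hhigh : (0:ℝ) ≤ (fun x : ℝ => x^3 - ((n:ℝ)-(δ:ℝ)-3)*x^2 - ((n:ℝ)+(δ:ℝ)^2-2)*x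
      + (δ:ℝ)*((δ:ℝ)+1)*((n:ℝ)-2*(δ:ℝ)-2)) ((n:ℝ)-2) := by
    have hid : (fun x : ℝ => x^3 - ((n:ℝ)-(δ:ℝ)-3)*x^2 - ((n:ℝ)+(δ:ℝ)^2-2)*x
        + (δ:ℝ)*((δ:ℝ)+1)*((n:ℝ)-2*(δ:ℝ)-2)) ((n:ℝ)-2)
        = (δ:ℝ)*(((n:ℝ)-2)*((n:ℝ)-(δ:ℝ)-2) + ((δ:ℝ)+1)*((n:ℝ)-2*(δ:ℝ)-2)) := by ring
    rw [hid]
    have a1 : (0:ℝ) ≤ ((n:ℝ)-2)*((n:ℝ)-(δ:ℝ)-2) := mul_nonneg (by linarith) (by linarith)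
    have a2 : (0:ℝ) ≤ ((δ:ℝ)+1)*((n:ℝ)-2*(δ:ℝ)-2) := mul_nonneg (by linarith) (by linarith)
    exact mul_nonneg hd0 (by linarith)
  obtain ⟨r, hrIcc, hroot0⟩ := intermediate_value_Icc hNle hcont ⟨hlow, hhigh⟩
  have hrlo : (n:ℝ) - (δ:ℝ) - 2 ≤ r := hrIcc.1
  have hrhi : r ≤ (n:ℝ) - 2 := hrIcc.2
  have hroot : r^3 - ((n:ℝ)-(δ:ℝ)-3)*r^2 - ((n:ℝ)+(δ:ℝ)^2-2)*r
      + (δ:ℝ)*((δ:ℝ)+1)*((n:ℝ)-2*(δ:ℝ)-2) = 0 := hroot0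
  have hrpos : (0:ℝ) < r := by linarith
  -- abbreviations (pure notation)
  have he : (0:ℝ) ≤ r - ((n:ℝ)-(δ:ℝ)-2) := by linarith
  have hm : (0:ℝ) ≤ (n:ℝ) - 5*(δ:ℝ) - 6 := by linarith
  -- the cubic relation in Newton coordinates
  have hC : ((n:ℝ)-2*(δ:ℝ)-2)*((n:ℝ)-1)*(r - ((n:ℝ)-(δ:ℝ)-2))
      + (2*(n:ℝ)-2*(δ:ℝ)-3)*(r - ((n:ℝ)-(δ:ℝ)-2))^2 + (r - ((n:ℝ)-(δ:ℝ)-2))^3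
      - (δ:ℝ)^2*((δ:ℝ)+1) = 0 := by linear_combination hroot
  -- 15·(r - N) ≤ δ
  have hd15 : (0:ℝ) ≤ (δ:ℝ) - 15*(r - ((n:ℝ)-(δ:ℝ)-2)) := by
    have hkey : (δ:ℝ)*((δ:ℝ)+1)*((δ:ℝ) - 15*(r - ((n:ℝ)-(δ:ℝ)-2)))
        = (20*(δ:ℝ)+20+8*((δ:ℝ)*((n:ℝ)-5*(δ:ℝ)-6))+9*((n:ℝ)-5*(δ:ℝ)-6)
            +((n:ℝ)-5*(δ:ℝ)-6)^2)*(r - ((n:ℝ)-(δ:ℝ)-2))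
          + (2*(n:ℝ)-2*(δ:ℝ)-3)*(r - ((n:ℝ)-(δ:ℝ)-2))^2 + (r - ((n:ℝ)-(δ:ℝ)-2))^3 := by
      linear_combination (-1 : ℝ) * hC
    have hdm : (0:ℝ) ≤ (δ:ℝ)*((n:ℝ)-5*(δ:ℝ)-6) := mul_nonneg hd0 hm
    have hcoef : (0:ℝ) ≤ (20*(δ:ℝ)+20+8*((δ:ℝ)*((n:ℝ)-5*(δ:ℝ)-6))+9*((n:ℝ)-5*(δ:ℝ)-6)
        +((n:ℝ)-5*(δ:ℝ)-6)^2) := by nlinarith [sq_nonneg ((n:ℝ)-5*(δ:ℝ)-6)]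
    have hrhs : (0:ℝ) ≤ (20*(δ:ℝ)+20+8*((δ:ℝ)*((n:ℝ)-5*(δ:ℝ)-6))+9*((n:ℝ)-5*(δ:ℝ)-6)
            +((n:ℝ)-5*(δ:ℝ)-6)^2)*(r - ((n:ℝ)-(δ:ℝ)-2))
          + (2*(n:ℝ)-2*(δ:ℝ)-3)*(r - ((n:ℝ)-(δ:ℝ)-2))^2 + (r - ((n:ℝ)-(δ:ℝ)-2))^3 := by
      have p1 : (0:ℝ) ≤ (20*(δ:ℝ)+20+8*((δ:ℝ)*((n:ℝ)-5*(δ:ℝ)-6))+9*((n:ℝ)-5*(δ:ℝ)-6)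
          +((n:ℝ)-5*(δ:ℝ)-6)^2)*(r - ((n:ℝ)-(δ:ℝ)-2)) := mul_nonneg hcoef he
      have p2 : (0:ℝ) ≤ (2*(n:ℝ)-2*(δ:ℝ)-3)*(r - ((n:ℝ)-(δ:ℝ)-2))^2 :=
        mul_nonneg (by linarith) (sq_nonneg _)
      have p3 : (0:ℝ) ≤ (r - ((n:ℝ)-(δ:ℝ)-2))^3 := by positivity
      linarith
    rcases Nat.eq_zero_or_pos δ with hδ0 | hδ1
    · subst hδ0
      simp only [Nat.cast_zero] at hkey hrhs he hm ⊢
      have hz : (20*(0:ℝ)+20+8*((0:ℝ)*((n:ℝ)-5*0-6))+9*((n:ℝ)-5*0-6)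
          +((n:ℝ)-5*0-6)^2)*(r - ((n:ℝ)-0-2)) ≤ 0 := by
        nlinarith [hkey]
      have h20 : (20:ℝ) ≤ 20*(0:ℝ)+20+8*((0:ℝ)*((n:ℝ)-5*0-6))+9*((n:ℝ)-5*0-6)
          +((n:ℝ)-5*0-6)^2 := by nlinarith [sq_nonneg ((n:ℝ)-5*0-6)]
      nlinarith [hz, h20, he]
    · have hδ1' : (1:ℝ) ≤ (δ:ℝ) := by exact_mod_cast hδ1
      by_contra hcon
      push_neg at hcon
      have hneg : (δ:ℝ)*((δ:ℝ)+1)*((δ:ℝ) - 15*(r - ((n:ℝ)-(δ:ℝ)-2))) < 0 := by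
        have hpos2 : (0:ℝ) < (δ:ℝ)*((δ:ℝ)+1) := by nlinarith
        nlinarith
      linarith [hkey ▸ hneg, hrhs]
  -- positivity of M = 4·φ_{(n-1)/2}(r), via the explicit certificate
  have hMpos : (0:ℝ) < 4*r^3 - 2*((n:ℝ)-5)*r^2 - ((n:ℝ)^2+2*(n:ℝ)-7)*r - (n:ℝ)^2 + 1 := by
    have hcert : 3375*(4*r^3 - 2*((n:ℝ)-5)*r^2 - ((n:ℝ)^2+2*(n:ℝ)-7)*r - (n:ℝ)^2 + 1)
        = 20250*(((n:ℝ)-2*(δ:ℝ)-2)*((n:ℝ)-1)*(r - ((n:ℝ)-(δ:ℝ)-2))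
            + (2*(n:ℝ)-2*(δ:ℝ)-3)*(r - ((n:ℝ)-(δ:ℝ)-2))^2 + (r - ((n:ℝ)-(δ:ℝ)-2))^3
            - (δ:ℝ)^2*((δ:ℝ)+1))
          + (1800*(r - ((n:ℝ)-(δ:ℝ)-2)) + 450*(r - ((n:ℝ)-(δ:ℝ)-2))^2 + 450*(((n:ℝ) - 5*(δ:ℝ) - 6)*(r - ((n:ℝ)-(δ:ℝ)-2))) + 2280*((δ:ℝ)*(r - ((n:ℝ)-(δ:ℝ)-2))) + 827*(δ:ℝ)^2) * ((δ:ℝ) - 15*(r - ((n:ℝ)-(δ:ℝ)-2)))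
          + (84375 + 50625*(r - ((n:ℝ)-(δ:ℝ)-2)) + 118125*((n:ℝ) - 5*(δ:ℝ) - 6) + 27000*(((n:ℝ) - 5*(δ:ℝ) - 6)*(r - ((n:ℝ)-(δ:ℝ)-2))) + 37125*((n:ℝ) - 5*(δ:ℝ) - 6)^2 + 3375*(((n:ℝ) - 5*(δ:ℝ) - 6)^2*(r - ((n:ℝ)-(δ:ℝ)-2))) + 3375*((n:ℝ) - 5*(δ:ℝ) - 6)^3 + 135000*(δ:ℝ) + 25200*((δ:ℝ)*(r - ((n:ℝ)-(δ:ℝ)-2))) + 162000*((δ:ℝ)*((n:ℝ) - 5*(δ:ℝ) - 6)) + 6300*((δ:ℝ)*((n:ℝ) - 5*(δ:ℝ) - 6)*(r - ((n:ℝ)-(δ:ℝ)-2))) + 27000*((δ:ℝ)*((n:ℝ) - 5*(δ:ℝ) - 6)^2) + 57375*(δ:ℝ)^2 + 50625*((δ:ℝ)^2*((n:ℝ) - 5*(δ:ℝ) - 6)) + 5923*(δ:ℝ)^3) := by ring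
    have hME : (0:ℝ) ≤ ((n:ℝ) - 5*(δ:ℝ) - 6)*(r - ((n:ℝ)-(δ:ℝ)-2)) := mul_nonneg hm he
    have hM2 : (0:ℝ) ≤ ((n:ℝ) - 5*(δ:ℝ) - 6)^2 := sq_nonneg _
    have hM2E : (0:ℝ) ≤ ((n:ℝ) - 5*(δ:ℝ) - 6)^2*(r - ((n:ℝ)-(δ:ℝ)-2)) := mul_nonneg hM2 he
    have hM3 : (0:ℝ) ≤ ((n:ℝ) - 5*(δ:ℝ) - 6)^3 := by positivity
    have hdE : (0:ℝ) ≤ (δ:ℝ)*(r - ((n:ℝ)-(δ:ℝ)-2)) := mul_nonneg hd0 he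
    have hdM : (0:ℝ) ≤ (δ:ℝ)*((n:ℝ) - 5*(δ:ℝ) - 6) := mul_nonneg hd0 hm
    have hdME : (0:ℝ) ≤ (δ:ℝ)*((n:ℝ) - 5*(δ:ℝ) - 6)*(r - ((n:ℝ)-(δ:ℝ)-2)) := mul_nonneg hdM he
    have hdM2 : (0:ℝ) ≤ (δ:ℝ)*((n:ℝ) - 5*(δ:ℝ) - 6)^2 := mul_nonneg hd0 hM2
    have hd2 : (0:ℝ) ≤ (δ:ℝ)^2 := sq_nonneg _
    have hd2M : (0:ℝ) ≤ (δ:ℝ)^2*((n:ℝ) - 5*(δ:ℝ) - 6) := mul_nonneg hd2 hm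
    have hd3 : (0:ℝ) ≤ (δ:ℝ)^3 := by positivity
    have hE2 : (0:ℝ) ≤ (r - ((n:ℝ)-(δ:ℝ)-2))^2 := sq_nonneg _
    have hW : (0:ℝ) ≤ (1800*(r - ((n:ℝ)-(δ:ℝ)-2)) + 450*(r - ((n:ℝ)-(δ:ℝ)-2))^2 + 450*(((n:ℝ) - 5*(δ:ℝ) - 6)*(r - ((n:ℝ)-(δ:ℝ)-2))) + 2280*((δ:ℝ)*(r - ((n:ℝ)-(δ:ℝ)-2))) + 827*(δ:ℝ)^2) := by linarith
    have hQ : (84375:ℝ) ≤ (84375 + 50625*(r - ((n:ℝ)-(δ:ℝ)-2)) + 118125*((n:ℝ) - 5*(δ:ℝ) - 6) + 27000*(((n:ℝ) - 5*(δ:ℝ) - 6)*(r - ((n:ℝ)-(δ:ℝ)-2))) + 37125*((n:ℝ) - 5*(δ:ℝ) - 6)^2 + 3375*(((n:ℝ) - 5*(δ:ℝ) - 6)^2*(r - ((n:ℝ)-(δ:ℝ)-2))) + 3375*((n:ℝ) - 5*(δ:ℝ) - 6)^3 + 135000*(δ:ℝ) + 25200*((δ:ℝ)*(r - ((n:ℝ)-(δ:ℝ)-2)))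 + 162000*((δ:ℝ)*((n:ℝ) - 5*(δ:ℝ) - 6)) + 6300*((δ:ℝ)*((n:ℝ) - 5*(δ:ℝ) - 6)*(r - ((n:ℝ)-(δ:ℝ)-2))) + 27000*((δ:ℝ)*((n:ℝ) - 5*(δ:ℝ) - 6)^2) + 57375*(δ:ℝ)^2 + 50625*((δ:ℝ)^2*((n:ℝ) - 5*(δ:ℝ) - 6)) + 5923*(δ:ℝ)^3) := by linarith
    have hWd : (0:ℝ) ≤ (1800*(r - ((n:ℝ)-(δ:ℝ)-2)) + 450*(r - ((n:ℝ)-(δ:ℝ)-2))^2 + 450*(((n:ℝ) - 5*(δ:ℝ) - 6)*(r - ((n:ℝ)-(δ:ℝ)-2))) + 2280*((δ:ℝ)*(r - ((n:ℝ)-(δ:ℝ)-2))) + 827*(δ:ℝ)^2) * ((δ:ℝ) - 15*(r - ((n:ℝ)-(δ:ℝ)-2))) := mul_nonneg hW hd15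
    linarith [hcert, hC, hWd, hQ]
  -- positivity of φ_s(r) via the chord/concavity identity
  have hPhiS : (0:ℝ) < r^3 - ((n:ℝ)-(s:ℝ)-3)*r^2 - ((n:ℝ)+(s:ℝ)^2-2)*r
      + (s:ℝ)*((s:ℝ)+1)*((n:ℝ)-2*(s:ℝ)-2) := by
    have hchord : (((n:ℝ)-1)/2 - (δ:ℝ)) * (4*(r^3 - ((n:ℝ)-(s:ℝ)-3)*r^2 - ((n:ℝ)+(s:ℝ)^2-2)*r
          + (s:ℝ)*((s:ℝ)+1)*((n:ℝ)-2*(s:ℝ)-2)))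
        = ((s:ℝ)-(δ:ℝ))*(4*r^3 - 2*((n:ℝ)-5)*r^2 - ((n:ℝ)^2+2*(n:ℝ)-7)*r - (n:ℝ)^2 + 1)
          + (4*(((n:ℝ)-1)/2 - (s:ℝ)))*(r^3 - ((n:ℝ)-(δ:ℝ)-3)*r^2 - ((n:ℝ)+(δ:ℝ)^2-2)*r
            + (δ:ℝ)*((δ:ℝ)+1)*((n:ℝ)-2*(δ:ℝ)-2))
          + 4*((s:ℝ)-(δ:ℝ))*(((n:ℝ)-1)/2-(s:ℝ))*(((n:ℝ)-1)/2-(δ:ℝ))*(2*(δ:ℝ)+2*(s:ℝ)+3+r) := by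
      ring
    have t1 : (0:ℝ) < ((s:ℝ)-(δ:ℝ))*(4*r^3 - 2*((n:ℝ)-5)*r^2 - ((n:ℝ)^2+2*(n:ℝ)-7)*r - (n:ℝ)^2 + 1) :=
      mul_pos (by linarith) hMpos
    have t3 : (0:ℝ) ≤ 4*((s:ℝ)-(δ:ℝ))*(((n:ℝ)-1)/2-(s:ℝ))*(((n:ℝ)-1)/2-(δ:ℝ))*(2*(δ:ℝ)+2*(s:ℝ)+3+r) := by
      have q1 : (0:ℝ) ≤ (s:ℝ)-(δ:ℝ) := by linarith
      have q2 : (0:ℝ) ≤ ((n:ℝ)-1)/2-(s:ℝ) := by linarith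
      have q3 : (0:ℝ) ≤ ((n:ℝ)-1)/2-(δ:ℝ) := by linarith
      have q4 : (0:ℝ) ≤ 2*(δ:ℝ)+2*(s:ℝ)+3+r := by linarith
      positivity
    have hs2d : (0:ℝ) < ((n:ℝ)-1)/2 - (δ:ℝ) := by linarith
    by_contra hcon
    push_neg at hcon
    have : (((n:ℝ)-1)/2 - (δ:ℝ)) * (4*(r^3 - ((n:ℝ)-(s:ℝ)-3)*r^2 - ((n:ℝ)+(s:ℝ)^2-2)*r
        + (s:ℝ)*((s:ℝ)+1)*((n:ℝ)-2*(s:ℝ)-2))) ≤ 0 := by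
      apply mul_nonpos_of_nonneg_of_nonpos hs2d.le
      linarith
    rw [hchord] at this
    nlinarith [t1, t3, hroot]
  -- casts
  have h2d : 2*δ + 1 ≤ n := by omega
  have hbscast : ((n - 2*s - 1 : ℕ):ℝ) = (n:ℝ) - 2*(s:ℝ) - 1 := by
    have h : n - 2*s - 1 = n - (2*s+1) := by omega
    rw [h, Nat.cast_sub hs2]
    push_cast
    ring
  have hbdcast : ((n - 2*δ - 1 : ℕ):ℝ) = (n:ℝ) - 2*(δ:ℝ) - 1 := by
    have h : n - 2*δ - 1 = n - (2*δ+1) := by omega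
    rw [h, Nat.cast_sub h2d]
    push_cast
    ring
  have hcscast : ((s + 1 : ℕ):ℝ) = (s:ℝ) + 1 := by push_cast; ring
  have hcdcast : ((δ + 1 : ℕ):ℝ) = (δ:ℝ) + 1 := by push_cast; ring
  -- upper bound:  specRad (G_s) < r
  have hupper : specRad (jGraph s (n - 2*s - 1) (s+1)) < r := by
    have hb1 : (0:ℝ) < r - ((n:ℝ)-2*(s:ℝ)-1) + 1 := by linarith
    have hbs0 : (0:ℝ) ≤ (n:ℝ)-2*(s:ℝ)-1 := by linarith
    have hx1 : (0:ℝ) < (r+(s:ℝ)+1)*(r - ((n:ℝ)-2*(s:ℝ)-1) + 1) + ((n:ℝ)-2*(s:ℝ)-1)*r := by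
      have := mul_pos (show (0:ℝ) < r+(s:ℝ)+1 by linarith) hb1
      nlinarith [mul_nonneg hbs0 hrpos.le]
    have hx2 : (0:ℝ) < r*(r+1) := by nlinarith
    have hx3 : (0:ℝ) < (r+1)*(r - ((n:ℝ)-2*(s:ℝ)-1) + 1) := mul_pos (by linarith) hb1
    refine lt_of_lt_of_eq (specRad_lt_of_cert s (n - 2*s - 1) (s+1) hx1 hx2 hx3 hrpos ?_ ?_ ?_) rfl
    · rw [hbscast, hcscast]
      have e1 : r*((r+(s:ℝ)+1)*(r - ((n:ℝ)-2*(s:ℝ)-1) + 1) + ((n:ℝ)-2*(s:ℝ)-1)*r)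
          - ((s:ℝ)*((r+(s:ℝ)+1)*(r - ((n:ℝ)-2*(s:ℝ)-1) + 1) + ((n:ℝ)-2*(s:ℝ)-1)*r)
            + ((n:ℝ)-2*(s:ℝ)-1)*(r*(r+1)) + ((s:ℝ)+1)*((r+1)*(r - ((n:ℝ)-2*(s:ℝ)-1) + 1))
            - ((r+(s:ℝ)+1)*(r - ((n:ℝ)-2*(s:ℝ)-1) + 1) + ((n:ℝ)-2*(s:ℝ)-1)*r))
          = r^3 - ((n:ℝ)-(s:ℝ)-3)*r^2 - ((n:ℝ)+(s:ℝ)^2-2)*r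
            + (s:ℝ)*((s:ℝ)+1)*((n:ℝ)-2*(s:ℝ)-2) := by ring
      linarith [e1, hPhiS]
    · rw [hbscast]
      have e2 : r*(r*(r+1))
          - ((s:ℝ)*((r+(s:ℝ)+1)*(r - ((n:ℝ)-2*(s:ℝ)-1) + 1) + ((n:ℝ)-2*(s:ℝ)-1)*r)
            + ((n:ℝ)-2*(s:ℝ)-1)*(r*(r+1)) - r*(r+1))
          = r^3 - ((n:ℝ)-(s:ℝ)-3)*r^2 - ((n:ℝ)+(s:ℝ)^2-2)*r
            + (s:ℝ)*((s:ℝ)+1)*((n:ℝ)-2*(s:ℝ)-2) := by ring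
      linarith [e2, hPhiS]
    · have e3 : r*((r+1)*(r - ((n:ℝ)-2*(s:ℝ)-1) + 1))
          - (s:ℝ)*((r+(s:ℝ)+1)*(r - ((n:ℝ)-2*(s:ℝ)-1) + 1) + ((n:ℝ)-2*(s:ℝ)-1)*r)
          = r^3 - ((n:ℝ)-(s:ℝ)-3)*r^2 - ((n:ℝ)+(s:ℝ)^2-2)*r
            + (s:ℝ)*((s:ℝ)+1)*((n:ℝ)-2*(s:ℝ)-2) := by ring
      linarith [e3, hPhiS]
  -- lower bound: r ≤ specRad (G_δ)
  have hlower : r ≤ specRad (jGraph δ (n - 2*δ - 1) (δ+1)) := by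
    have hb1 : (0:ℝ) ≤ r - ((n:ℝ)-2*(δ:ℝ)-1) + 1 := by linarith
    have hbd0 : (0:ℝ) ≤ (n:ℝ)-2*(δ:ℝ)-1 := by linarith
    have hy1 : (0:ℝ) ≤ (r+(δ:ℝ)+1)*(r - ((n:ℝ)-2*(δ:ℝ)-1) + 1) + ((n:ℝ)-2*(δ:ℝ)-1)*r := by
      have := mul_nonneg (show (0:ℝ) ≤ r+(δ:ℝ)+1 by linarith) hb1
      nlinarith [mul_nonneg hbd0 hrpos.le]
    have hy2 : (0:ℝ) < r*(r+1) := by nlinarith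
    have hy3 : (0:ℝ) ≤ (r+1)*(r - ((n:ℝ)-2*(δ:ℝ)-1) + 1) := mul_nonneg (by linarith) hb1
    have hbpos : 0 < n - 2*δ - 1 := by omega
    refine le_specRad_of_cert δ (n - 2*δ - 1) (δ+1) hbpos hy1 hy2 hy3 ?_ ?_ ?_
    · rw [hbdcast, hcdcast]
      have e1 : r*((r+(δ:ℝ)+1)*(r - ((n:ℝ)-2*(δ:ℝ)-1) + 1) + ((n:ℝ)-2*(δ:ℝ)-1)*r)
          - ((δ:ℝ)*((r+(δ:ℝ)+1)*(r - ((n:ℝ)-2*(δ:ℝ)-1) + 1) + ((n:ℝ)-2*(δ:ℝ)-1)*r)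
            + ((n:ℝ)-2*(δ:ℝ)-1)*(r*(r+1)) + ((δ:ℝ)+1)*((r+1)*(r - ((n:ℝ)-2*(δ:ℝ)-1) + 1))
            - ((r+(δ:ℝ)+1)*(r - ((n:ℝ)-2*(δ:ℝ)-1) + 1) + ((n:ℝ)-2*(δ:ℝ)-1)*r))
          = r^3 - ((n:ℝ)-(δ:ℝ)-3)*r^2 - ((n:ℝ)+(δ:ℝ)^2-2)*r
            + (δ:ℝ)*((δ:ℝ)+1)*((n:ℝ)-2*(δ:ℝ)-2) := by ring
      linarith [e1, hroot]
    · rw [hbdcast]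
      have e2 : r*(r*(r+1))
          - ((δ:ℝ)*((r+(δ:ℝ)+1)*(r - ((n:ℝ)-2*(δ:ℝ)-1) + 1) + ((n:ℝ)-2*(δ:ℝ)-1)*r)
            + ((n:ℝ)-2*(δ:ℝ)-1)*(r*(r+1)) - r*(r+1))
          = r^3 - ((n:ℝ)-(δ:ℝ)-3)*r^2 - ((n:ℝ)+(δ:ℝ)^2-2)*r
            + (δ:ℝ)*((δ:ℝ)+1)*((n:ℝ)-2*(δ:ℝ)-2) := by ring
      linarith [e2, hroot]
    · have e3 : r*((r+1)*(r - ((n:ℝ)-2*(δ:ℝ)-1) + 1))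
          - (δ:ℝ)*((r+(δ:ℝ)+1)*(r - ((n:ℝ)-2*(δ:ℝ)-1) + 1) + ((n:ℝ)-2*(δ:ℝ)-1)*r)
          = r^3 - ((n:ℝ)-(δ:ℝ)-3)*r^2 - ((n:ℝ)+(δ:ℝ)^2-2)*r
            + (δ:ℝ)*((δ:ℝ)+1)*((n:ℝ)-2*(δ:ℝ)-2) := by ring
      linarith [e3, hroot]
  exact lt_of_lt_of_le hupper hlower
end

section
/- Let δ ≥ 0 and n ≥ 2δ+1 be integers. Then the graph K_δ ∨ (K_{n−2δ−1} + (δ+1)K_1) has no spanning subgraph each of whose connected components is isomorphic either to K_2 or to a cycle; that is, it has no {K_2, cycles}-factor. -/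
open scoped Classical
open Finset

private lemma degree_eq_card_induce_supp' {V : Type*} [Fintype V] (H : SimpleGraph V)
    (c : H.ConnectedComponent) (v : V) (hv : v ∈ c.supp) :
    H.degree v = Fintype.card ((H.induce c.supp).neighborSet ⟨v, hv⟩) := by
  rw [← SimpleGraph.card_neighborSet_eq_degree]
  apply Fintype.card_congr
  exact ⟨fun u => ⟨⟨u.1, ((SimpleGraph.ConnectedComponent.connectedComponentMk_eq_of_adj
      u.2).symm.trans hv : _)⟩, u.2⟩, fun u => ⟨u.1.1, u.2⟩,
    fun u => rfl, fun u => rfl⟩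

private lemma degree_one_or_two' {V : Type*} [Fintype V] (H : SimpleGraph V)
    (hcomp : ∀ c : H.ConnectedComponent,
      Nonempty (H.induce c.supp ≃g (⊤ : SimpleGraph (Fin 2))) ∨
      ∃ m : ℕ, 3 ≤ m ∧ Nonempty (H.induce c.supp ≃g SimpleGraph.cycleGraph m))
    (c : H.ConnectedComponent) :
    (∀ v ∈ c.supp, H.degree v = 1) ∨ (∀ v ∈ c.supp, H.degree v = 2) := by
  rcases hcomp c with ⟨⟨e⟩⟩ | ⟨m, hm, ⟨e⟩⟩
  · left
    intro v hv
    rw [degree_eq_card_induce_supp' H c v hv, Fintype.card_congr (e.mapNeighborSet ⟨v, hv⟩),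
      SimpleGraph.card_neighborSet_eq_degree, SimpleGraph.complete_graph_degree]
    simp
  · right
    intro v hv
    obtain ⟨k, rfl⟩ : ∃ k, m = k + 3 := ⟨m - 3, by omega⟩
    rw [degree_eq_card_induce_supp' H c v hv, Fintype.card_congr (e.mapNeighborSet ⟨v, hv⟩),
      SimpleGraph.card_neighborSet_eq_degree, SimpleGraph.cycleGraph_degree_three_le]


/-- For `n ≥ 2δ+1`, the graph `K_δ ∨ (K_{n−2δ−1} + (δ+1)K_1)` has no
`{K_2, cycles}`-factor. -/
theorem stmt15 (δ n : ℕ) (hn : 2 * δ + 1 ≤ n) :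
    ¬ HasK2CycleFactor (jGraph δ (n - 2 * δ - 1) (δ + 1)) := by
  set b := n - 2 * δ - 1 with hb
  rintro ⟨H, hle, hcomp⟩
  -- degree facts
  have hdeg : ∀ v, H.degree v = 1 ∨ H.degree v = 2 := fun v =>
    (degree_one_or_two' H hcomp (H.connectedComponentMk v)).imp (fun h => h v rfl)
      (fun h => h v rfl)
  have hadjdeg : ∀ v w, H.Adj v w → H.degree v = H.degree w := by
    intro v w hvw
    have hw : w ∈ (H.connectedComponentMk v).supp :=
      (SimpleGraph.ConnectedComponent.connectedComponentMk_eq_of_adj hvw.symm : _)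
    rcases degree_one_or_two' H hcomp (H.connectedComponentMk v) with h | h <;>
      rw [h v rfl, h w hw]
  set S : Finset (Fin (δ + b + (δ + 1))) := univ.filter (fun v => (v : ℕ) < δ) with hS
  set I : Finset (Fin (δ + b + (δ + 1))) := univ.filter (fun v => δ + b ≤ (v : ℕ)) with hI
  -- neighbors of I-vertices lie in S
  have hIS : ∀ v ∈ I, ∀ u, H.Adj v u → u ∈ S := by
    intro v hv u hadj
    have hv' : δ + b ≤ (v : ℕ) := by simpa [hI] using hv
    have h2 := hle hadj
    rw [jGraph, SimpleGraph.fromRel_adj] at h2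
    simp only [hS, mem_filter, mem_univ, true_and]
    omega
  -- key: for v in I, the weighted neighbor sum is 2
  have key : ∀ v, ∑ s ∈ H.neighborFinset v, (3 - H.degree s) = 2 := by
    intro v
    have h1 : ∀ s ∈ H.neighborFinset v, (3 - H.degree s) = (3 - H.degree v) := by
      intro s hs
      rw [hadjdeg v s (by simpa using hs)]
    rw [Finset.sum_congr rfl h1, Finset.sum_const, smul_eq_mul,
      SimpleGraph.card_neighborFinset_eq_degree]
    rcases hdeg v with h | h <;> rw [h]
  -- rewrite each inner sum over S
  have hnb : ∀ v ∈ I, H.neighborFinset v = S.filter (fun s => H.Adj v s) := by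
    intro v hv
    ext s
    simp only [SimpleGraph.mem_neighborFinset, mem_filter]
    exact ⟨fun h => ⟨hIS v hv s h, h⟩, fun h => h.2⟩
  have lhs : ∑ v ∈ I, ∑ s ∈ S, (if H.Adj v s then 3 - H.degree s else 0) = 2 * I.card := by
    rw [Finset.sum_congr rfl (fun v hv => by
      rw [← Finset.sum_filter, ← hnb v hv, key v])]
    rw [Finset.sum_const, smul_eq_mul, mul_comm]
  -- upper bound per s
  have hub : ∀ s : Fin (δ + b + (δ + 1)),
      ∑ v ∈ I, (if H.Adj v s then 3 - H.degree s else 0) ≤ 2 := by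
    intro s
    calc ∑ v ∈ I, (if H.Adj v s then 3 - H.degree s else 0)
        ≤ ∑ v : Fin (δ + b + (δ + 1)), (if H.Adj v s then 3 - H.degree s else 0) :=
          Finset.sum_le_sum_of_subset (Finset.subset_univ I)
      _ = ∑ v ∈ H.neighborFinset s, (3 - H.degree s) := by
          rw [← Finset.sum_filter]
          apply Finset.sum_congr _ (fun _ _ => rfl)
          ext v
          simp [SimpleGraph.mem_neighborFinset, SimpleGraph.adj_comm]
      _ = H.degree s * (3 - H.degree s) := by
          rw [Finset.sum_const, smul_eq_mul, SimpleGraph.card_neighborFinset_eq_degree]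
      _ ≤ 2 := by rcases hdeg s with h | h <;> rw [h] <;> omega
  have total : 2 * I.card ≤ 2 * S.card := by
    rw [← lhs, Finset.sum_comm]
    calc ∑ s ∈ S, ∑ v ∈ I, (if H.Adj v s then 3 - H.degree s else 0)
        ≤ ∑ s ∈ S, 2 := Finset.sum_le_sum (fun s _ => hub s)
      _ = 2 * S.card := by rw [Finset.sum_const, smul_eq_mul, mul_comm]
  -- cardinalities
  have hScard : S.card ≤ δ := by
    have := Finset.card_le_card_of_injOn (s := S) (t := Finset.range δ)
      (fun v : Fin (δ + b + (δ + 1)) => (v : ℕ))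
      (fun v hv => by
        simp only [Finset.mem_coe, hS, mem_filter] at hv
        exact Finset.mem_range.mpr hv.2)
      (fun x _ y _ h => Fin.val_injective h)
    simpa using this
  have hIcard : δ + 1 ≤ I.card := by
    have := Finset.card_le_card_of_injOn (s := Finset.range (δ + 1)) (t := I)
      (fun k : ℕ => (⟨(δ + b + k) % (δ + b + (δ + 1)), Nat.mod_lt _ (by omega)⟩ :
        Fin (δ + b + (δ + 1))))
      (fun k hk => by
        simp only [Finset.coe_range, Set.mem_Iio] at hk
        simp only [Finset.mem_coe, hI, mem_filter, mem_univ, true_and]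
        have : (δ + b + k) % (δ + b + (δ + 1)) = δ + b + k := Nat.mod_eq_of_lt (by omega)
        simp [this])
      (fun x hx y hy h => by
        simp only [Finset.coe_range, Set.mem_Iio] at hx hy
        have h' := congrArg Fin.val h
        simp only at h'
        rw [Nat.mod_eq_of_lt (by omega), Nat.mod_eq_of_lt (by omega)] at h'
        omega)
    simpa using this
  omega
end

section
/- Let k ≥ 2 and δ ≥ 0 be integers and let n ≥ (k+1)δ+1. Then the graph K_δ ∨ (K_{n−kδ−δ−1} + (kδ+1)K_1) has no {K_{1,1}, K_{1,2}, …, K_{1,k}}-factor. -/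
open scoped Classical
open Finset

lemma star_factor_aux {V : Type*} [Fintype V] {k : ℕ} (hk : 1 ≤ k) (H : SimpleGraph V)
    (hcomp : ∀ c : H.ConnectedComponent, ∃ j : ℕ, 1 ≤ j ∧ j ≤ k ∧
      Nonempty (H.induce c.supp ≃g completeBipartiteGraph (Fin 1) (Fin j))) :
    (∀ v : V, ∃ u, H.Adj v u) ∧ ∀ v : V, (H.neighborFinset v).card ≤ k := by
  have key : ∀ v : V, (∃ u, H.Adj v u) ∧ (H.neighborFinset v).card ≤ k := by
    intro v
    set C := H.connectedComponentMk v with hC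
    obtain ⟨j, hj1, hjk, ⟨e⟩⟩ := hcomp C
    have hv : v ∈ C.supp := rfl
    have hsupp : ∀ u, H.Adj v u → u ∈ C.supp := by
      intro u hu
      exact (SimpleGraph.ConnectedComponent.mem_supp_iff C u).mpr
        (SimpleGraph.ConnectedComponent.sound hu.symm.reachable)
    have hadj_ind : ∀ (x y : C.supp), (H.induce C.supp).Adj x y ↔ H.Adj x y := by
      intro x y; simp [SimpleGraph.comap_adj]
    constructor
    · -- existence of a neighbor
      rcases h0 : e ⟨v, hv⟩ with a0 | b0
      · refine ⟨(e.symm (Sum.inr ⟨0, hj1⟩) : C.supp), ?_⟩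
        have : (H.induce C.supp).Adj ⟨v, hv⟩ (e.symm (Sum.inr ⟨0, hj1⟩)) := by
          rw [← e.symm_apply_apply ⟨v, hv⟩, e.symm.map_adj_iff, h0]
          simp
        exact (hadj_ind _ _).mp this
      · refine ⟨(e.symm (Sum.inl 0) : C.supp), ?_⟩
        have : (H.induce C.supp).Adj ⟨v, hv⟩ (e.symm (Sum.inl 0)) := by
          rw [← e.symm_apply_apply ⟨v, hv⟩, e.symm.map_adj_iff, h0]
          simp
        exact (hadj_ind _ _).mp this
    · -- degree bound
      have hstar : ∀ u (hu : H.Adj v u),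
          (completeBipartiteGraph (Fin 1) (Fin j)).Adj (e ⟨v, hv⟩) (e ⟨u, hsupp u hu⟩) := by
        intro u hu
        rw [e.map_adj_iff, hadj_ind]
        exact hu
      rcases h0 : e ⟨v, hv⟩ with a0 | b0
      · -- center case: inject neighbors into Fin j
        calc (H.neighborFinset v).card ≤ (Finset.univ : Finset (Fin j)).card := by
              apply Finset.card_le_card_of_injOn
                (fun u => if h : u ∈ C.supp then Sum.elim (fun _ => (⟨0, hj1⟩ : Fin j)) id (e ⟨u, h⟩)
                  else ⟨0, hj1⟩)
              · intro u _; exact Finset.mem_univ _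
              · intro u1 hu1 u2 hu2 heq
                rw [Finset.mem_coe, SimpleGraph.mem_neighborFinset] at hu1 hu2
                have h1 := hstar u1 hu1
                have h2 := hstar u2 hu2
                rw [h0] at h1 h2
                rcases he1 : e ⟨u1, hsupp u1 hu1⟩ with t1 | t1
                · rw [he1] at h1; simp at h1
                rcases he2 : e ⟨u2, hsupp u2 hu2⟩ with t2 | t2
                · rw [he2] at h2; simp at h2
                simp only [dif_pos (hsupp u1 hu1), dif_pos (hsupp u2 hu2), he1, he2,
                  Sum.elim_inr, id] at heq
                have : e ⟨u1, hsupp u1 hu1⟩ = e ⟨u2, hsupp u2 hu2⟩ := by rw [he1, he2, heq]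
                exact congrArg Subtype.val (e.injective this)
          _ = j := by simp
          _ ≤ k := hjk
      · -- leaf case: all neighbors are equal
        have hone : (H.neighborFinset v).card ≤ 1 := by
          apply Finset.card_le_one.mpr
          intro u1 hu1 u2 hu2
          rw [SimpleGraph.mem_neighborFinset] at hu1 hu2
          have h1 := hstar u1 hu1
          have h2 := hstar u2 hu2
          rw [h0] at h1 h2
          rcases he1 : e ⟨u1, hsupp u1 hu1⟩ with t1 | t1
          swap
          · rw [he1] at h1; simp at h1
          rcases he2 : e ⟨u2, hsupp u2 hu2⟩ with t2 | t2
          swap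
          · rw [he2] at h2; simp at h2
          have : e ⟨u1, hsupp u1 hu1⟩ = e ⟨u2, hsupp u2 hu2⟩ := by
            rw [he1, he2, Subsingleton.elim t1 t2]
          exact congrArg Subtype.val (e.injective this)
        omega
  exact ⟨fun v => (key v).1, fun v => (key v).2⟩

/-- For `k ≥ 2` and `n ≥ (k+1)δ+1`, the graph `K_δ ∨ (K_{n−kδ−δ−1} + (kδ+1)K_1)` has
no `{K_{1,1}, …, K_{1,k}}`-factor. -/
theorem stmt16 (δ k n : ℕ) (hk : 2 ≤ k) (hn : (k + 1) * δ + 1 ≤ n) :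
    ¬ HasStarFactor k (jGraph δ (n - k * δ - δ - 1) (k * δ + 1)) := by
  set b := n - k * δ - δ - 1 with hb
  rintro ⟨H, hHG, hcomp⟩
  obtain ⟨hex, hdeg⟩ := star_factor_aux (by omega : 1 ≤ k) H hcomp
  choose φ hφ using hex
  set S := Finset.univ.filter (fun v : Fin (δ + b + (k * δ + 1)) => (v : ℕ) < δ) with hS
  set I := Finset.univ.filter (fun v : Fin (δ + b + (k * δ + 1)) => δ + b ≤ (v : ℕ)) with hI
  have hmaps : ∀ v ∈ I, φ v ∈ S := by
    intro v hv
    rw [hI, Finset.mem_filter] at hv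
    have hadj : (jGraph δ b (k * δ + 1)).Adj v (φ v) := hHG (hφ v)
    rw [jGraph, SimpleGraph.fromRel_adj] at hadj
    obtain ⟨-, h⟩ := hadj
    rw [hS, Finset.mem_filter]
    exact ⟨Finset.mem_univ _, by omega⟩
  have hfib : ∀ s ∈ S, (I.filter (fun v => φ v = s)).card ≤ k := by
    intro s _
    refine le_trans (Finset.card_le_card ?_) (hdeg s)
    intro v hv
    rw [Finset.mem_filter] at hv
    rw [SimpleGraph.mem_neighborFinset, ← hv.2]
    exact (hφ v).symm
  have h1 : I.card ≤ k * S.card :=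
    Finset.card_le_mul_card_image_of_maps_to hmaps k hfib
  have hSc : S.card ≤ δ := by
    have h2 : S.card ≤ (Finset.range δ).card := by
      refine Finset.card_le_card_of_injOn (fun v => (v : ℕ)) ?_ ?_
      · intro v hv
        rw [Finset.mem_coe, Finset.mem_filter] at hv
        exact Finset.mem_range.mpr hv.2
      · intro v₁ _ v₂ _ h; exact Fin.val_injective h
    simpa using h2
  have hIc : k * δ + 1 ≤ I.card := by
    have h3 : (Finset.univ : Finset (Fin (k * δ + 1))).card ≤ I.card := by
      refine Finset.card_le_card_of_injOn
        (fun i : Fin (k * δ + 1) => (⟨δ + b + (i : ℕ), by omega⟩ : Fin (δ + b + (k * δ + 1)))) ?_ ?_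
      · intro i _
        rw [Finset.mem_coe, Finset.mem_filter]
        exact ⟨Finset.mem_univ _, by simp⟩
      · intro i₁ _ i₂ _ h
        have h4 : δ + b + (i₁ : ℕ) = δ + b + (i₂ : ℕ) := Fin.val_eq_of_eq h
        exact Fin.val_injective (by omega)
    simpa using h3
  have h5 : k * S.card ≤ k * δ := Nat.mul_le_mul_left k hSc
  omega
end

section
/- Let k be a positive integer and let G be a simple graph of order n with minimum degree δ such that μ_f(G) ≤ (n−k)/2. Then there exists an integer s with δ ≤ s ≤ (n−k)/2 such that G is a spanning subgraph of K_s ∨ (K_{n−2s−k} + (s+k)K_1); consequently ρ(G) ≤ ρ(K_s ∨ (K_{n−2s−k} + (s+k)K_1)), with equality if and only if G ≅ K_s ∨ (K_{n−2s−k} + (s+k)K_1). -/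
open scoped Classical
open Finset

open RealInnerProductSpace

noncomputable section Aux17

abbrev EE (n : ℕ) := EuclideanSpace ℝ (Fin n)

def adjm {n : ℕ} (G : SimpleGraph (Fin n)) : Matrix (Fin n) (Fin n) ℝ :=
  Matrix.of fun i j => if G.Adj i j then (1 : ℝ) else 0

def LG {n : ℕ} (G : SimpleGraph (Fin n)) : EE n →ₗ[ℝ] EE n :=
  Matrix.toEuclideanLin (adjm G)

lemma LG_apply {n : ℕ} (G : SimpleGraph (Fin n)) (x : EE n) (i : Fin n) :
    LG G x i = ∑ j, adjm G i j * x j := by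
  simp [LG, Matrix.toEuclideanLin_apply, Matrix.mulVec, dotProduct]

def QQ {n : ℕ} (G : SimpleGraph (Fin n)) (x : Fin n → ℝ) : ℝ :=
  ∑ p : Fin n × Fin n, adjm G p.1 p.2 * x p.2 * x p.1

lemma inner_QQ {n : ℕ} (G : SimpleGraph (Fin n)) (x : EE n) :
    ⟪LG G x, x⟫ = QQ G x := by
  simp [PiLp.inner_apply, LG_apply, QQ, Fintype.sum_prod_type, Finset.sum_mul]
  refine Finset.sum_congr rfl (fun i _ => ?_)
  rw [Finset.mul_sum]
  exact Finset.sum_congr rfl (fun j _ => by ring)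

lemma adjm_symm {n : ℕ} (G : SimpleGraph (Fin n)) (i j : Fin n) : adjm G i j = adjm G j i := by
  simp [adjm, G.adj_comm]

lemma adjm_nonneg {n : ℕ} (G : SimpleGraph (Fin n)) (i j : Fin n) : 0 ≤ adjm G i j := by
  simp only [adjm, Matrix.of_apply]; split <;> norm_num

lemma LG_isSymm {n : ℕ} (G : SimpleGraph (Fin n)) : (LG G).IsSymmetric := by
  intro x y
  simp only [PiLp.inner_apply, LG_apply, RCLike.inner_apply, conj_trivial]
  simp only [Finset.sum_mul, Finset.mul_sum]
  rw [Finset.sum_comm]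
  apply Finset.sum_congr rfl; intro i _
  apply Finset.sum_congr rfl; intro j _
  rw [adjm_symm]; ring

def lam {n : ℕ} (G : SimpleGraph (Fin n)) : ℝ :=
  ⨆ x : { x : EE n // x ≠ 0 }, ⟪LG G x, x⟫ / ‖(x : EE n)‖ ^ 2

end Aux17
noncomputable section Aux17b
open Module

lemma rayleigh_bdd {n : ℕ} (G : SimpleGraph (Fin n)) :
    BddAbove (Set.range fun x : { x : EE n // x ≠ 0 } => ⟪LG G x, x⟫ / ‖(x : EE n)‖ ^ 2) := by
  refine ⟨‖(LG G).toContinuousLinearMap‖, ?_⟩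
  rintro r ⟨⟨x, hx⟩, rfl⟩
  have hx' : (0:ℝ) < ‖x‖ := norm_pos_iff.mpr hx
  rw [div_le_iff₀ (by positivity)]
  calc ⟪LG G x, x⟫ ≤ ‖LG G x‖ * ‖x‖ := real_inner_le_norm _ _
    _ ≤ ‖(LG G).toContinuousLinearMap‖ * ‖x‖ * ‖x‖ := by
        have := (LG G).toContinuousLinearMap.le_opNorm x
        rw [LinearMap.coe_toContinuousLinearMap'] at this
        nlinarith [norm_nonneg x]
    _ = ‖(LG G).toContinuousLinearMap‖ * ‖x‖ ^ 2 := by ring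

lemma rayleigh_le_lam {n : ℕ} (G : SimpleGraph (Fin n)) (x : EE n) (hx : x ≠ 0) :
    ⟪LG G x, x⟫ / ‖x‖ ^ 2 ≤ lam G :=
  le_ciSup (rayleigh_bdd G) ⟨x, hx⟩

lemma hasEigenvalue_lam {n : ℕ} (hn : 0 < n) (G : SimpleGraph (Fin n)) :
    Module.End.HasEigenvalue (LG G) (lam G) := by
  haveI : Nontrivial (EE n) := by
    refine ⟨0, EuclideanSpace.single ⟨0, hn⟩ 1, ?_⟩
    intro h
    have := congr_fun (congr_arg (fun z : EE n => (z : Fin n → ℝ)) h) ⟨0, hn⟩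
    simp [EuclideanSpace.single_apply] at this
  have h := (LG_isSymm G).hasEigenvalue_iSup_of_finiteDimensional
  exact h

lemma eig_le_lam {n : ℕ} (G : SimpleGraph (Fin n)) (μ : ℝ)
    (h : Module.End.HasEigenvalue (LG G) μ) : μ ≤ lam G := by
  obtain ⟨v, hv⟩ := h.exists_hasEigenvector
  have hv0 : v ≠ 0 := hv.right
  have happ : LG G v = μ • v := hv.apply_eq_smul
  have hvn : ‖v‖ ≠ 0 := norm_ne_zero_iff.mpr hv0
  have : ⟪LG G v, v⟫ / ‖v‖ ^ 2 = μ := by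
    rw [happ, real_inner_smul_left, real_inner_self_eq_norm_sq]
    field_simp
  rw [← this]
  exact rayleigh_le_lam G v hv0

end Aux17b
noncomputable section Aux17c
open Module

lemma eigen_transfer_s17 {n : ℕ} (G : SimpleGraph (Fin n)) (μ : ℝ) :
    Module.End.HasEigenvalue (Matrix.toLin' (adjm G)) μ ↔
      Module.End.HasEigenvalue (LG G) μ := by
  constructor
  · intro h
    obtain ⟨v, hv⟩ := h.exists_hasEigenvector
    have h1 : Matrix.mulVec (adjm G) v = μ • v := by
      have := hv.apply_eq_smul; rwa [Matrix.toLin'_apply] at this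
    refine Module.End.hasEigenvalue_of_hasEigenvector (x := (WithLp.equiv 2 _).symm v) ?_
    rw [Module.End.hasEigenvector_iff, Module.End.mem_eigenspace_iff]
    constructor
    · rw [LG, WithLp.equiv_symm_apply, Matrix.toEuclideanLin_apply_piLp_toLp, h1]
      simp
    · simpa using hv.right
  · intro h
    obtain ⟨v, hv⟩ := h.exists_hasEigenvector
    refine Module.End.hasEigenvalue_of_hasEigenvector (x := WithLp.equiv 2 _ v) ?_
    rw [Module.End.hasEigenvector_iff, Module.End.mem_eigenspace_iff]
    have h1 := hv.apply_eq_smul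
    rw [LG, Matrix.toEuclideanLin_apply] at h1
    constructor
    · rw [Matrix.toLin'_apply]
      have := congr_arg (WithLp.equiv 2 (Fin n → ℝ)) h1
      simpa using this
    · simpa using hv.right

lemma specRad_eq_lam {n : ℕ} (hn : 0 < n) (G : SimpleGraph (Fin n)) :
    specRad G = lam G := by
  have hset : {x : ℝ | Module.End.HasEigenvalue
      (Matrix.toLin' (Matrix.of fun i j => if G.Adj i j then (1:ℝ) else 0)) x}
      = {x : ℝ | Module.End.HasEigenvalue (LG G) x} :=
    Set.ext fun μ => eigen_transfer_s17 G μ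
  rw [specRad, hset]
  apply le_antisymm
  · exact csSup_le ⟨lam G, hasEigenvalue_lam hn G⟩ (fun μ hμ => eig_le_lam G μ hμ)
  · exact le_csSup ⟨lam G, fun μ hμ => eig_le_lam G μ hμ⟩ (hasEigenvalue_lam hn G)

end Aux17c
noncomputable section Aux17d

def permAbs {n n' : ℕ} (e : Fin n ≃ Fin n') (x : EE n) : EE n' :=
  (WithLp.equiv 2 (Fin n' → ℝ)).symm (fun w => |x (e.symm w)|)

lemma permAbs_apply {n n' : ℕ} (e : Fin n ≃ Fin n') (x : EE n) (w : Fin n') :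
    permAbs e x w = |x (e.symm w)| := by
  simp [permAbs]

lemma permAbs_norm {n n' : ℕ} (e : Fin n ≃ Fin n') (x : EE n) :
    ‖permAbs e x‖ = ‖x‖ := by
  rw [EuclideanSpace.norm_eq, EuclideanSpace.norm_eq]
  congr 1
  rw [← Equiv.sum_comp e.symm (fun u => ‖x u‖ ^ 2)]
  apply Finset.sum_congr rfl
  intro w _
  rw [permAbs_apply]
  simp [sq_abs, Real.norm_eq_abs]

lemma permAbs_nonneg {n n' : ℕ} (e : Fin n ≃ Fin n') (x : EE n) (w : Fin n') :
    0 ≤ permAbs e x w := by rw [permAbs_apply]; positivity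

lemma QQ_perm {n n' : ℕ} {J : SimpleGraph (Fin n')} (e : Fin n ≃ Fin n') (x : EE n) :
    QQ J (permAbs e x) = ∑ p : Fin n × Fin n,
      adjm J (e p.1) (e p.2) * |x p.2| * |x p.1| := by
  rw [QQ, ← Equiv.sum_comp (Equiv.prodCongr e e)]
  apply Finset.sum_congr rfl
  intro p _
  simp only [Equiv.prodCongr_apply, Prod.map_fst, Prod.map_snd, permAbs_apply]
  rw [Equiv.symm_apply_apply, Equiv.symm_apply_apply]

lemma QQ_mono {n n' : ℕ} {G : SimpleGraph (Fin n)} {J : SimpleGraph (Fin n')}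
    (e : Fin n ≃ Fin n') (hsub : ∀ u v, G.Adj u v → J.Adj (e u) (e v)) (x : EE n) :
    QQ G x ≤ QQ J (permAbs e x) := by
  rw [QQ_perm e x, QQ]
  apply Finset.sum_le_sum
  intro p _
  by_cases hG : G.Adj p.1 p.2
  · have hJ : J.Adj (e p.1) (e p.2) := hsub _ _ hG
    simp only [adjm, Matrix.of_apply, if_pos hG, if_pos hJ, one_mul]
    calc x p.2 * x p.1 ≤ |x p.2 * x p.1| := le_abs_self _
      _ = |x p.2| * |x p.1| := abs_mul _ _
  · simp only [adjm, Matrix.of_apply, if_neg hG, zero_mul]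
    have : (0:ℝ) ≤ adjm J (e p.1) (e p.2) := adjm_nonneg J _ _
    simp only [adjm, Matrix.of_apply] at this
    positivity

lemma lam_mono {n n' : ℕ} (hn : 0 < n) (G : SimpleGraph (Fin n)) (J : SimpleGraph (Fin n'))
    (e : Fin n ≃ Fin n') (hsub : ∀ u v, G.Adj u v → J.Adj (e u) (e v)) :
    lam G ≤ lam J := by
  haveI : Nonempty { x : EE n // x ≠ 0 } := by
    refine ⟨⟨EuclideanSpace.single ⟨0, hn⟩ 1, ?_⟩⟩
    intro h
    have := congr_fun (congr_arg (fun z : EE n => (z : Fin n → ℝ)) h) ⟨0, hn⟩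
    simp [EuclideanSpace.single_apply] at this
  apply ciSup_le
  rintro ⟨x, hx⟩
  have hxn : (0:ℝ) < ‖x‖ := norm_pos_iff.mpr hx
  have hy0 : permAbs e x ≠ 0 := by
    intro h
    rw [← norm_eq_zero, permAbs_norm] at h
    exact hxn.ne' h
  calc ⟪LG G x, x⟫ / ‖x‖ ^ 2 = QQ G x / ‖x‖ ^ 2 := by rw [inner_QQ]
    _ ≤ QQ J (permAbs e x) / ‖x‖ ^ 2 := by
        have h := QQ_mono e hsub x
        gcongr
    _ = ⟪LG J (permAbs e x), permAbs e x⟫ / ‖permAbs e x‖ ^ 2 := by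
        rw [inner_QQ, permAbs_norm]
    _ ≤ lam J := rayleigh_le_lam J _ hy0

end Aux17d
noncomputable section Aux17e
open Module

lemma specRad_mono {n n' : ℕ} (hn : 0 < n) (hn' : 0 < n') (G : SimpleGraph (Fin n))
    (J : SimpleGraph (Fin n')) (e : Fin n ≃ Fin n')
    (hsub : ∀ u v, G.Adj u v → J.Adj (e u) (e v)) : specRad G ≤ specRad J := by
  rw [specRad_eq_lam hn, specRad_eq_lam hn']
  exact lam_mono hn G J e hsub

lemma jAdj {a b c : ℕ} (x y : Fin (a+b+c)) : (jGraph a b c).Adj x y ↔ x ≠ y ∧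
    (((x:ℕ) < a ∨ ((x:ℕ) < a+b ∧ (y:ℕ) < a+b)) ∨ ((y:ℕ) < a ∨ ((y:ℕ) < a+b ∧ (x:ℕ) < a+b))) := by
  rw [jGraph, SimpleGraph.fromRel_adj]

lemma lam_ge_one {n : ℕ} (J : SimpleGraph (Fin n)) (p q : Fin n) (h : J.Adj p q) :
    1 ≤ lam J := by
  have hne : p ≠ q := h.ne
  set z0 : EE n := (WithLp.equiv 2 (Fin n → ℝ)).symm (fun i => if i = p ∨ i = q then 1 else 0)
    with hz0
  have hz0app : ∀ i, z0 i = if i = p ∨ i = q then 1 else 0 := by intro i; simp [hz0]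
  have hsum : ∀ g : Fin n → ℝ, (∑ i, (if i = p ∨ i = q then (1:ℝ) else 0) * g i) = g p + g q := by
    intro g
    have : ∀ i, (if i = p ∨ i = q then (1:ℝ) else 0) * g i
        = (if i = p then g i else 0) + (if i = q then g i else 0) := by
      intro i
      rcases eq_or_ne i p with h1 | h1 <;> rcases eq_or_ne i q with h2 | h2
      · exact absurd (h1.symm.trans h2) hne
      · simp [h1, h2, hne, Ne.symm hne]
      · simp [h1, h2, hne, Ne.symm hne]
      · simp [h1, h2]
    simp only [this, Finset.sum_add_distrib, Finset.sum_ite_eq', Finset.mem_univ, if_true]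
  have hQ : QQ J z0 = 2 := by
    rw [QQ, Fintype.sum_prod_type]
    have h1 : ∀ i, (∑ j, adjm J i j * z0 j * z0 i) = (if i = p ∨ i = q then (1:ℝ) else 0) *
        (adjm J i p + adjm J i q) := by
      intro i
      have : ∀ j, adjm J i j * z0 j * z0 i
          = (if j = p ∨ j = q then (1:ℝ) else 0) * (adjm J i j * z0 i) := by
        intro j; rw [hz0app j]; ring
      rw [Finset.sum_congr rfl (fun j _ => this j), hsum (fun j => adjm J i j * z0 i), hz0app i]
      ring
    rw [Finset.sum_congr rfl (fun i _ => h1 i), hsum (fun i => adjm J i p + adjm J i q)]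
    have hpp : adjm J p p = 0 := by simp [adjm]
    have hqq : adjm J q q = 0 := by simp [adjm]
    have hpq : adjm J p q = 1 := by simp [adjm, h]
    have hqp : adjm J q p = 1 := by simp [adjm, h.symm]
    rw [hpp, hqq, hpq, hqp]; norm_num
  have hnorm : ‖z0‖ ^ 2 = 2 := by
    rw [← real_inner_self_eq_norm_sq]
    have : ⟪z0, z0⟫ = ∑ i, z0 i * z0 i := by
      simp only [PiLp.inner_apply, RCLike.inner_apply, conj_trivial]
    rw [this]
    have : ∀ i, z0 i * z0 i = (if i = p ∨ i = q then (1:ℝ) else 0) * z0 i := by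
      intro i; rw [hz0app i]
    rw [Finset.sum_congr rfl (fun i _ => this i), hsum, hz0app, hz0app]
    norm_num [hne]
  have hz0ne : z0 ≠ 0 := by
    intro hcon
    have h2 : z0 p = 0 := by rw [hcon]; rfl
    rw [hz0app p] at h2
    simp at h2
  have := rayleigh_le_lam J z0 hz0ne
  rw [inner_QQ, hQ, hnorm] at this
  linarith

end Aux17e
noncomputable section Aux17f

lemma jprop {a b c : ℕ} (y : Fin (a+b+c) → ℝ) (hy : ∀ w, 0 ≤ y w) (ρ : ℝ) (hρ : 0 < ρ)
    (heig : ∀ w, (∑ z, adjm (jGraph a b c) w z * y z) = ρ * y w)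
    (p q : Fin (a+b+c)) (hpq : (jGraph a b c).Adj p q) (h0 : y p * y q = 0) :
    ∀ w, y w = 0 := by
  have zero_of : ∀ w, y w = 0 → ∀ z, (jGraph a b c).Adj w z → y z = 0 := by
    intro w hw z hadj
    have hsum : (∑ z, adjm (jGraph a b c) w z * y z) = 0 := by
      rw [heig w, hw, mul_zero]
    have hterm := (Finset.sum_eq_zero_iff_of_nonneg (fun z _ =>
      mul_nonneg (adjm_nonneg _ _ _) (hy z))).mp hsum z (Finset.mem_univ z)
    have hone : adjm (jGraph a b c) w z = 1 := by simp [adjm, hadj]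
    rw [hone, one_mul] at hterm
    exact hterm
  have S1 : ∀ w : Fin (a+b+c), (w:ℕ) < a → y w = 0 → ∀ z, y z = 0 := by
    intro w hwa hw z
    rcases eq_or_ne z w with rfl | hzw
    · exact hw
    · refine zero_of w hw z ?_
      rw [jAdj]
      exact ⟨fun hc => hzw (hc.symm), Or.inl (Or.inl hwa)⟩
  -- reduce to: some endpoint q0 with y q0 = 0
  have key : ∀ p q : Fin (a+b+c), (jGraph a b c).Adj p q → y q = 0 → ∀ w, y w = 0 := by
    intro p q hadj hq0
    by_cases ha : 0 < a
    · by_cases hqa : (q:ℕ) < a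
      · exact S1 q hqa hq0
      · have hpos : 0 < a + b + c := lt_of_lt_of_le ha (by omega)
        set w0 : Fin (a+b+c) := ⟨0, hpos⟩ with hw0
        have hne : q ≠ w0 := by
          intro hc
          rw [Fin.ext_iff] at hc
          simp [hw0] at hc
          omega
        have hadj0 : (jGraph a b c).Adj q w0 := by
          rw [jAdj]
          refine ⟨hne, Or.inr (Or.inl ?_)⟩
          simp [hw0]; omega
        have hy0 : y w0 = 0 := zero_of q hq0 w0 hadj0
        exact S1 w0 (by simp [hw0]; omega) hy0
    · have ha0 : a = 0 := by omega
      have hboth : (q:ℕ) < a + b := by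
        rw [jAdj] at hadj
        rcases hadj.2 with (h | h) | (h | h) <;> omega
      have hz1 : ∀ z : Fin (a+b+c), (z:ℕ) < a + b → y z = 0 := by
        intro z hz
        rcases eq_or_ne z q with rfl | hzq
        · exact hq0
        · refine zero_of q hq0 z ?_
          rw [jAdj]
          exact ⟨fun hc => hzq hc.symm, Or.inl (Or.inr ⟨hboth, hz⟩)⟩
      intro w
      by_cases hw : (w:ℕ) < a + b
      · exact hz1 w hw
      · -- row of w is zero
        have hrow : (∑ z, adjm (jGraph a b c) w z * y z) = 0 := by
          apply Finset.sum_eq_zero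
          intro z _
          have : ¬ (jGraph a b c).Adj w z := by
            rw [jAdj]
            rintro ⟨-, (h | h) | (h | h)⟩ <;> omega
          simp [adjm, this]
        have := heig w
        rw [hrow] at this
        have := mul_eq_zero.mp this.symm
        rcases this with h | h
        · exact absurd h hρ.ne'
        · exact h
  rcases mul_eq_zero.mp h0 with h | h
  · exact key q p hpq.symm h
  · exact key p q hpq h
end Aux17f
noncomputable section Aux17g
open Module

lemma main_spec {n a b c : ℕ} (hn : 0 < n) (G : SimpleGraph (Fin n))
    (e : Fin n ≃ Fin (a+b+c)) (hsub : ∀ u v, G.Adj u v → (jGraph a b c).Adj (e u) (e v)) :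
    specRad G ≤ specRad (jGraph a b c) ∧
      (specRad G = specRad (jGraph a b c) ↔ Nonempty (G ≃g jGraph a b c)) := by
  set J := jGraph a b c with hJ
  have hn' : 0 < a + b + c := (e ⟨0, hn⟩).pos
  have hle : specRad G ≤ specRad J := specRad_mono hn hn' G J e hsub
  refine ⟨hle, ?_, ?_⟩
  · -- equality → iso
    intro heq
    by_cases hall : ∀ w z, J.Adj w z → G.Adj (e.symm w) (e.symm z)
    · refine ⟨⟨e, ?_⟩⟩
      intro u v
      constructor
      · intro h
        have := hall _ _ h
        simpa using this
      · exact hsub u v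
    · exfalso
      push_neg at hall
      obtain ⟨p, q, hpq, hnadj⟩ := hall
      obtain ⟨x₀, hx₀⟩ := (hasEigenvalue_lam hn G).exists_hasEigenvector
      have hx0ne : x₀ ≠ 0 := hx₀.right
      have hxn : (0:ℝ) < ‖x₀‖ := norm_pos_iff.mpr hx0ne
      set ρ := lam J with hρdef
      have heq' : lam G = ρ := by
        rw [hρdef, ← specRad_eq_lam hn, ← specRad_eq_lam hn']
        exact heq
      set y := permAbs e x₀ with hy
      have hyn : ‖y‖ = ‖x₀‖ := permAbs_norm e x₀
      have hyn2 : ‖y‖ ^ 2 = ‖x₀‖ ^ 2 := by rw [hyn]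
      have hy0 : y ≠ 0 := by
        intro hcon; rw [← norm_eq_zero, hyn] at hcon; exact hxn.ne' hcon
      have hypos : (0:ℝ) < ‖y‖ := norm_pos_iff.mpr hy0
      have hρ1 : (1:ℝ) ≤ ρ := lam_ge_one J p q hpq
      have hρpos : (0:ℝ) < ρ := lt_of_lt_of_le one_pos hρ1
      have hQx : QQ G x₀ = lam G * ‖x₀‖ ^ 2 := by
        rw [← inner_QQ, hx₀.apply_eq_smul, real_inner_smul_left, real_inner_self_eq_norm_sq]
      have hQy_le : QQ J y ≤ ρ * ‖y‖ ^ 2 := by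
        have h1 := rayleigh_le_lam J y hy0
        rw [inner_QQ, div_le_iff₀ (pow_pos hypos 2)] at h1
        linarith [h1]
      have hmono : QQ G x₀ ≤ QQ J y := QQ_mono e hsub x₀
      have h5 : ρ * ‖y‖ ^ 2 = ρ * ‖x₀‖ ^ 2 := by rw [hyn2]
      have h6 : lam G * ‖x₀‖ ^ 2 = ρ * ‖x₀‖ ^ 2 := by rw [heq']
      have hQeq : QQ G x₀ = QQ J y := by linarith
      have hterm : ∀ pp : Fin n × Fin n,
          adjm G pp.1 pp.2 * x₀ pp.2 * x₀ pp.1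
            = adjm J (e pp.1) (e pp.2) * |x₀ pp.2| * |x₀ pp.1| := by
        have hptwise : ∀ pp ∈ (Finset.univ : Finset (Fin n × Fin n)),
            adjm G pp.1 pp.2 * x₀ pp.2 * x₀ pp.1
              ≤ adjm J (e pp.1) (e pp.2) * |x₀ pp.2| * |x₀ pp.1| := by
          intro pp _
          by_cases hG : G.Adj pp.1 pp.2
          · have hJa : J.Adj (e pp.1) (e pp.2) := hsub _ _ hG
            simp only [adjm, Matrix.of_apply, if_pos hG, if_pos hJa, one_mul]
            calc x₀ pp.2 * x₀ pp.1 ≤ |x₀ pp.2 * x₀ pp.1| := le_abs_self _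
              _ = |x₀ pp.2| * |x₀ pp.1| := abs_mul _ _
          · simp only [adjm, Matrix.of_apply, if_neg hG, zero_mul]
            have := adjm_nonneg J (e pp.1) (e pp.2)
            simp only [adjm, Matrix.of_apply] at this ⊢
            positivity
        have hsums : (∑ pp : Fin n × Fin n, adjm G pp.1 pp.2 * x₀ pp.2 * x₀ pp.1)
            = ∑ pp : Fin n × Fin n, adjm J (e pp.1) (e pp.2) * |x₀ pp.2| * |x₀ pp.1| := by
          rw [← QQ, ← QQ_perm e x₀, ← hy, hQeq]
        intro pp
        exact (Finset.sum_eq_sum_iff_of_le hptwise).mp hsums pp (Finset.mem_univ pp)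
      have hzero : y p * y q = 0 := by
        have hthis := hterm (e.symm p, e.symm q)
        simp only [Equiv.apply_symm_apply] at hthis
        have hGa : adjm G (e.symm p) (e.symm q) = 0 := by
          simp [adjm, hnadj]
        have hJa : adjm J p q = 1 := by simp [adjm, hpq]
        rw [hGa, hJa, zero_mul, zero_mul, one_mul] at hthis
        have hyp : y p = |x₀ (e.symm p)| := by rw [hy, permAbs_apply]
        have hyq : y q = |x₀ (e.symm q)| := by rw [hy, permAbs_apply]
        rw [hyp, hyq, mul_comm]
        exact hthis.symm
      set Tc := (LG J).toContinuousLinearMap with hTc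
      have hSA : IsSelfAdjoint Tc := by
        rw [ContinuousLinearMap.isSelfAdjoint_iff_isSymmetric]
        have hco : (Tc : EE (a+b+c) →ₗ[ℝ] EE (a+b+c)) = LG J :=
          LinearMap.coe_toContinuousLinearMap _
        rw [hco]
        exact LG_isSymm J
      have hQyρ : ⟪LG J y, y⟫ = ρ * ‖y‖ ^ 2 := by
        rw [inner_QQ, ← hQeq, hQx, heq', hyn2]
      have hmax : IsMaxOn Tc.reApplyInnerSelf (Metric.sphere (0 : EE (a+b+c)) ‖y‖) y := by
        intro z hz
        have hzn : ‖z‖ = ‖y‖ := by simpa [dist_zero_right] using hz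
        have hz0 : z ≠ 0 := by
          intro hc; rw [hc, norm_zero] at hzn; exact hypos.ne hzn
        have h1 := rayleigh_le_lam J z hz0
        rw [inner_QQ, div_le_iff₀ (pow_pos (norm_pos_iff.mpr hz0) 2)] at h1
        simp only [Set.mem_setOf_eq, ContinuousLinearMap.reApplyInnerSelf_apply,
          RCLike.re_to_real]
        show ⟪Tc z, z⟫ ≤ ⟪Tc y, y⟫
        calc ⟪Tc z, z⟫ = QQ J z := by
              rw [show Tc z = LG J z from rfl, inner_QQ]
          _ ≤ ρ * ‖z‖ ^ 2 := h1
          _ = ρ * ‖y‖ ^ 2 := by rw [hzn]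
          _ = ⟪Tc y, y⟫ := by
              rw [show Tc y = LG J y from rfl, hQyρ]
      have heigy := hSA.hasEigenvector_of_isMaxOn hy0 hmax
      have hsup : (⨆ x : {x : EE (a+b+c) // x ≠ 0}, Tc.rayleighQuotient x) = ρ := by
        rw [hρdef]
        show _ = lam J
        rw [lam]
        apply iSup_congr
        intro x
        simp only [ContinuousLinearMap.rayleighQuotient, ContinuousLinearMap.reApplyInnerSelf_apply,
          RCLike.re_to_real]
        rfl
      have happ : LG J y = ρ • y := by
        have h2 := heigy.apply_eq_smul
        rw [hsup] at h2
        exact h2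
      have hcoord : ∀ w, (∑ z, adjm (jGraph a b c) w z * y z) = ρ * y w := by
        intro w
        have h3 : (LG J y) w = (ρ • y) w := by rw [happ]
        rw [LG_apply] at h3
        simpa using h3
      have hally := jprop (fun w => y w) (fun w => by rw [hy]; exact permAbs_nonneg e x₀ w)
        ρ hρpos hcoord p q hpq hzero
      apply hy0
      ext w
      simpa using hally w
  · -- iso → equality
    rintro ⟨φ⟩
    refine le_antisymm hle ?_
    refine specRad_mono hn' hn J G φ.symm.toEquiv ?_
    intro u v h
    exact φ.symm.map_adj_iff.mpr h

end Aux17g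
noncomputable section Aux17h

lemma fracNu_bddAbove {n : ℕ} (G : SimpleGraph (Fin n)) :
    BddAbove {x : ℝ | ∃ f : Sym2 (Fin n) → ℝ, IsFracMatching G f ∧
      x = ∑ e ∈ G.edgeFinset, f e} := by
  refine ⟨(G.edgeFinset.card : ℝ), ?_⟩
  rintro x ⟨f, hf, rfl⟩
  calc ∑ e ∈ G.edgeFinset, f e ≤ ∑ e ∈ G.edgeFinset, (1:ℝ) :=
        Finset.sum_le_sum (fun e he => (hf.1 e he).2)
    _ = G.edgeFinset.card := by simp

lemma fracNu_ge {n : ℕ} (G : SimpleGraph (Fin n)) (f : Sym2 (Fin n) → ℝ)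
    (hf : IsFracMatching G f) : (∑ e ∈ G.edgeFinset, f e) ≤ fracNu G :=
  le_csSup (fracNu_bddAbove G) ⟨f, hf, rfl⟩

lemma fracNu_nonneg {n : ℕ} (G : SimpleGraph (Fin n)) : 0 ≤ fracNu G := by
  have h := fracNu_ge G 0 ⟨fun e _ => ⟨le_refl _, zero_le_one⟩, fun v => by simp⟩
  simpa using h

set_option maxHeartbeats 1600000 in
lemma existsA {n k : ℕ} (hk : 0 < k) (G : SimpleGraph (Fin n))
    (hμ : fracNu G ≤ ((n : ℝ) - k) / 2) :
    ∃ A : Finset (Fin n), (A.biUnion (fun v => G.neighborFinset v)).card + k ≤ A.card := by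
  by_contra hcon
  push_neg at hcon
  have hcon' : ∀ A : Finset (Fin n), A.card ≤ (A.biUnion (fun v => G.neighborFinset v)).card
      + (k - 1) := by
    intro A
    have := hcon A
    omega
  -- Hall's theorem with k-1 dummy vertices
  set t : Fin n → Finset (Fin n ⊕ Fin (k-1)) := fun v =>
    ((G.neighborFinset v).image Sum.inl) ∪ ((Finset.univ : Finset (Fin (k-1))).image Sum.inr)
    with ht
  have hhall : ∀ s : Finset (Fin n), s.card ≤ (s.biUnion t).card := by
    intro s
    rcases s.eq_empty_or_nonempty with rfl | hs
    · simp
    · obtain ⟨v0, hv0⟩ := hs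
      have hsub : ((s.biUnion (fun v => G.neighborFinset v)).image Sum.inl
          ∪ ((Finset.univ : Finset (Fin (k-1))).image Sum.inr)) ⊆ s.biUnion t := by
        intro x hx
        rcases Finset.mem_union.mp hx with hx | hx
        · obtain ⟨u, hu, rfl⟩ := Finset.mem_image.mp hx
          obtain ⟨v, hv, hu2⟩ := Finset.mem_biUnion.mp hu
          exact Finset.mem_biUnion.mpr ⟨v, hv, Finset.mem_union_left _
            (Finset.mem_image_of_mem _ hu2)⟩
        · exact Finset.mem_biUnion.mpr ⟨v0, hv0, Finset.mem_union_right _ hx⟩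
      have hdisj : Disjoint ((s.biUnion (fun v => G.neighborFinset v)).image Sum.inl)
          (((Finset.univ : Finset (Fin (k-1))).image Sum.inr)) := by
        rw [Finset.disjoint_left]
        rintro x hx hx'
        obtain ⟨u, -, rfl⟩ := Finset.mem_image.mp hx
        obtain ⟨j, -, hj⟩ := Finset.mem_image.mp hx'
        exact Sum.inl_ne_inr hj.symm
      have hcard := Finset.card_le_card hsub
      rw [Finset.card_union_of_disjoint hdisj,
        Finset.card_image_of_injective _ Sum.inl_injective,
        Finset.card_image_of_injective _ Sum.inr_injective] at hcard
      calc s.card ≤ (s.biUnion (fun v => G.neighborFinset v)).card + (k-1) := hcon' s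
        _ = (s.biUnion (fun v => G.neighborFinset v)).card + Finset.univ.card := by
            simp
        _ ≤ (s.biUnion t).card := hcard
  obtain ⟨f, hfinj, hft⟩ := (Finset.all_card_le_biUnion_card_iff_exists_injective t).mp hhall
  -- the partial matching
  set p : Fin n → Fin n := fun v => match f v with | Sum.inl u => u | Sum.inr _ => v with hp
  set M : Finset (Fin n) := Finset.univ.filter (fun v => ∃ u, f v = Sum.inl u) with hM
  have hMadj : ∀ v ∈ M, G.Adj v (p v) := by
    intro v hv
    rw [hM, Finset.mem_filter] at hv
    obtain ⟨u, hu⟩ := hv.2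
    have hmem := hft v
    rw [hu, ht] at hmem
    simp only [Finset.mem_union, Finset.mem_image] at hmem
    rcases hmem with ⟨w, hw, hweq⟩ | ⟨j, -, hj⟩
    · have hwu : w = u := Sum.inl_injective hweq
      rw [hp]
      simp only [hu]
      rw [← hwu]
      exact (SimpleGraph.mem_neighborFinset G v w).mp hw
    · exact absurd hj (Sum.inr_ne_inl)
  have hMcard : n ≤ M.card + (k-1) := by
    have hsplit := Finset.card_filter_add_card_filter_not
      (s := (Finset.univ : Finset (Fin n))) (p := fun v => ∃ u, f v = Sum.inl u)
    have hcompl : (Finset.univ.filter (fun v => ¬ ∃ u, f v = Sum.inl u)).card ≤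
        ((Finset.univ : Finset (Fin (k-1))).image (Option.some)).card := by
      apply Finset.card_le_card_of_injOn (fun v => (f v).getRight?)
      · intro v hv
        rw [Finset.mem_coe, Finset.mem_filter] at hv
        rcases hfv : f v with u | j
        · exact absurd ⟨u, hfv⟩ hv.2
        · simp [hfv]
      · intro v1 h1 v2 h2 heq
        rw [Finset.mem_coe, Finset.mem_filter] at h1 h2
        rcases h1' : f v1 with u1 | j1
        · exact absurd ⟨u1, h1'⟩ h1.2
        rcases h2' : f v2 with u2 | j2
        · exact absurd ⟨u2, h2'⟩ h2.2
        apply hfinj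
        have heq' : (f v1).getRight? = (f v2).getRight? := heq
        rw [h1', h2'] at heq'
        simp only [Sum.getRight?_inr, Option.some_inj] at heq'
        rw [h1', h2', heq']
    rw [Finset.card_image_of_injective _ (Option.some_injective _)] at hcompl
    rw [← hM] at hsplit
    simp only [Finset.card_univ, Fintype.card_fin] at hsplit hcompl
    omega
  -- the fractional matching built from the partial matching
  set key : Fin n → Sym2 (Fin n) := fun a => s(a, p a) with hkey
  have hkeyE : ∀ a ∈ M, key a ∈ G.edgeFinset := by
    intro a ha
    rw [hkey, SimpleGraph.mem_edgeFinset]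
    exact (hMadj a ha)
  set gf : Sym2 (Fin n) → ℝ := fun e => ((M.filter (fun a => key a = e)).card : ℝ)/2 with hgf
  have hfilter_le_two : ∀ e ∈ G.edgeFinset, (M.filter (fun a => key a = e)).card ≤ 2 := by
    intro e he
    obtain ⟨⟨x, y⟩, rfl⟩ := Quot.exists_rep e
    have hsub : M.filter (fun a => key a = s(x, y)) ⊆ {x, y} := by
      intro a ha
      rw [Finset.mem_filter] at ha
      have hmem : a ∈ key a := by rw [hkey]; exact Sym2.mem_mk_left a (p a)
      rw [ha.2] at hmem
      rw [Sym2.mem_iff] at hmem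
      simp only [Finset.mem_insert, Finset.mem_singleton]
      exact hmem
    calc (M.filter (fun a => key a = s(x, y))).card ≤ ({x, y} : Finset (Fin n)).card :=
          Finset.card_le_card hsub
      _ ≤ 2 := Finset.card_insert_le _ _ |>.trans (by simp)
  have hTcard : ∀ v : Fin n, (M.filter (fun a => v ∈ key a)).card ≤ 2 := by
    intro v
    have hsub : M.filter (fun a => v ∈ key a) ⊆
        insert v (M.filter (fun a => f a = Sum.inl v)) := by
      intro a ha
      rw [Finset.mem_filter] at ha
      have := ha.2
      rw [hkey, Sym2.mem_iff] at this
      rcases this with rfl | hpv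
      · exact Finset.mem_insert_self _ _
      · apply Finset.mem_insert_of_mem
        rw [Finset.mem_filter]
        refine ⟨ha.1, ?_⟩
        have := ha.1
        rw [hM, Finset.mem_filter] at this
        obtain ⟨u, hu⟩ := this.2
        rw [hu]
        rw [hp] at hpv
        simp only [hu] at hpv
        rw [hpv]
    have h1 : (M.filter (fun a => f a = Sum.inl v)).card ≤ 1 := by
      rw [Finset.card_le_one]
      intro a ha b hb
      rw [Finset.mem_filter] at ha hb
      exact hfinj (ha.2.trans hb.2.symm)
    calc (M.filter (fun a => v ∈ key a)).card ≤ _ := Finset.card_le_card hsub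
      _ ≤ (M.filter (fun a => f a = Sum.inl v)).card + 1 := Finset.card_insert_le _ _
      _ ≤ 2 := by omega
  have hfrac : IsFracMatching G gf := by
    constructor
    · intro e he
      constructor
      · simp only [hgf]; positivity
      · simp only [hgf]
        have h2 : ((M.filter (fun a => key a = e)).card:ℝ) ≤ 2 := by
          exact_mod_cast hfilter_le_two e he
        rw [div_le_one (by norm_num)]
        exact h2
    · intro v
      have hstep : ∀ e ∈ G.edgeFinset, (if v ∈ e then gf e else 0)
          = (((M.filter (fun a => v ∈ key a)).filter (fun a => key a = e)).card : ℝ)/2 := by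
        intro e he
        by_cases hv : v ∈ e
        · rw [if_pos hv]
          simp only [hgf]
          have hsetq : M.filter (fun a => key a = e)
              = (M.filter (fun a => v ∈ key a)).filter (fun a => key a = e) := by
            ext a
            simp only [Finset.mem_filter]
            constructor
            · rintro ⟨ha, h2⟩; exact ⟨⟨ha, by rw [h2]; exact hv⟩, h2⟩
            · rintro ⟨⟨ha, -⟩, h2⟩; exact ⟨ha, h2⟩
          rw [hsetq]
        · rw [if_neg hv]
          have hempty : (M.filter (fun a => v ∈ key a)).filter (fun a => key a = e) = ∅ := by
            rw [Finset.eq_empty_iff_forall_notMem]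
            intro a ha
            rw [Finset.mem_filter, Finset.mem_filter] at ha
            exact hv (ha.2 ▸ ha.1.2)
          rw [hempty]
          simp
      rw [Finset.sum_congr rfl hstep, ← Finset.sum_div]
      have hfib : (∑ e ∈ G.edgeFinset,
          ((M.filter (fun a => v ∈ key a)).filter (fun a => key a = e)).card)
          = (M.filter (fun a => v ∈ key a)).card := by
        symm
        apply Finset.card_eq_sum_card_fiberwise
        intro a ha
        exact hkeyE a (Finset.mem_filter.mp ha).1
      have : (∑ e ∈ G.edgeFinset,
          (((M.filter (fun a => v ∈ key a)).filter (fun a => key a = e)).card : ℝ))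
          = ((M.filter (fun a => v ∈ key a)).card : ℝ) := by
        rw [← hfib]; push_cast; rfl
      rw [this]
      have h2 : ((M.filter (fun a => v ∈ key a)).card : ℝ) ≤ 2 := by
        exact_mod_cast hTcard v
      rw [div_le_one (by norm_num)]
      exact h2
  have htot : (∑ e ∈ G.edgeFinset, gf e) = (M.card : ℝ)/2 := by
    simp only [hgf]
    rw [← Finset.sum_div]
    congr 1
    have hfib : (∑ e ∈ G.edgeFinset, (M.filter (fun a => key a = e)).card) = M.card :=
      (Finset.card_eq_sum_card_fiberwise hkeyE).symm
    rw [← hfib]; push_cast; rfl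
  have hge := fracNu_ge G gf hfrac
  rw [htot] at hge
  have hle2 := le_trans hge hμ
  have hle3 : (M.card : ℝ) + k ≤ n := by linarith
  have hle4 : M.card + k ≤ n := by exact_mod_cast hle3
  omega

end Aux17h
noncomputable section Aux17i

lemma existsSI {n k : ℕ} (hk : 0 < k) (G : SimpleGraph (Fin n))
    (hμ : fracNu G ≤ ((n : ℝ) - k) / 2) :
    ∃ S I : Finset (Fin n), Disjoint S I ∧ S.card + k ≤ I.card ∧
      (∀ v ∈ I, ∀ u, G.Adj v u → u ∈ S) := by
  obtain ⟨A, hA⟩ := existsA hk G hμ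
  set NA := A.biUnion (fun v => G.neighborFinset v) with hNA
  set A1 := A \ NA with hA1
  set S := A1.biUnion (fun v => G.neighborFinset v) with hS
  have hSsub : S ⊆ NA := by
    apply Finset.biUnion_subset_biUnion_of_subset_left
    exact Finset.sdiff_subset
  have hSA : ∀ x ∈ S, x ∉ A := by
    intro x hx hxA
    obtain ⟨b, hb, hbx⟩ := Finset.mem_biUnion.mp hx
    have hbadj : G.Adj b x := (SimpleGraph.mem_neighborFinset G b x).mp hbx
    have hbNA : b ∈ NA := by
      rw [hNA]
      exact Finset.mem_biUnion.mpr ⟨x, hxA, (SimpleGraph.mem_neighborFinset G x b).mpr hbadj.symm⟩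
    rw [hA1, Finset.mem_sdiff] at hb
    exact hb.2 hbNA
  have hdisj : Disjoint S A1 := by
    rw [Finset.disjoint_left]
    intro x hx hx1
    exact hSA x hx (Finset.mem_sdiff.mp hx1).1
  have hnb : ∀ v ∈ A1, ∀ u, G.Adj v u → u ∈ S := by
    intro v hv u hadj
    exact Finset.mem_biUnion.mpr ⟨v, hv, (SimpleGraph.mem_neighborFinset G v u).mpr hadj⟩
  -- cardinalities
  have hc1 : A1.card + (A ∩ NA).card = A.card := Finset.card_sdiff_add_card_inter A NA
  have hc2 : S.card + (A ∩ NA).card ≤ NA.card := by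
    have hsub2 : S ⊆ NA \ A := by
      intro x hx
      rw [Finset.mem_sdiff]
      exact ⟨hSsub hx, hSA x hx⟩
    have := Finset.card_le_card hsub2
    have h3 : (NA \ A).card + (NA ∩ A).card = NA.card := Finset.card_sdiff_add_card_inter NA A
    rw [Finset.inter_comm] at h3
    omega
  refine ⟨S, A1, hdisj, by omega, hnb⟩

end Aux17i
noncomputable section Aux17j

lemma partition_equiv {n : ℕ} (S I' : Finset (Fin n)) (hdisj : Disjoint S I')
    {s b c : ℕ} (hs : S.card = s) (hc : I'.card = c)
    (hb : ((Finset.univ \ S) \ I').card = b) (hn : n = s + b + c) :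
    ∃ e : Fin n ≃ Fin (s + b + c),
      (∀ v ∈ S, ((e v : Fin (s+b+c)) : ℕ) < s) ∧
      (∀ v ∈ ((Finset.univ \ S) \ I'), ((e v : Fin (s+b+c)) : ℕ) < s + b) := by
  classical
  have eS : {v : Fin n // v ∈ S} ≃ Fin s := by
    have hcard : Fintype.card {v : Fin n // v ∈ S} = s := by rw [Fintype.card_coe]; exact hs
    exact Fintype.equivFinOfCardEq hcard
  have eI : {x : {v : Fin n // v ∉ S} // (x : Fin n) ∈ I'} ≃ Fin c := by
    have hcard : Fintype.card {v : Fin n // v ∉ S ∧ v ∈ I'} = c := by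
      rw [Fintype.card_subtype, ← hc]
      congr 1
      ext v
      simp only [Finset.mem_filter, Finset.mem_univ, true_and, iff_iff_implies_and_implies]
      constructor
      · exact fun h => h.2
      · intro h; exact ⟨fun hS' => (Finset.disjoint_left.mp hdisj) hS' h, h⟩
    exact (Equiv.subtypeSubtypeEquivSubtypeInter _ _).trans (Fintype.equivFinOfCardEq hcard)
  have eR : {x : {v : Fin n // v ∉ S} // ¬ ((x : Fin n) ∈ I')} ≃ Fin b := by
    have hcard : Fintype.card {v : Fin n // v ∉ S ∧ v ∉ I'} = b := by
      rw [Fintype.card_subtype, ← hb]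
      congr 1
      ext v
      simp [Finset.mem_sdiff]
    exact (Equiv.subtypeSubtypeEquivSubtypeInter _ _).trans (Fintype.equivFinOfCardEq hcard)
  set e2 : {v : Fin n // v ∉ S} ≃ Fin b ⊕ Fin c :=
    (Equiv.sumCompl (fun x : {v : Fin n // v ∉ S} => (x : Fin n) ∈ I')).symm.trans
      ((Equiv.sumCongr eI eR).trans (Equiv.sumComm (Fin c) (Fin b))) with he2
  set τ : (Fin s ⊕ (Fin b ⊕ Fin c)) ≃ Fin (s + (b + c)) :=
    (Equiv.sumCongr (Equiv.refl (Fin s)) finSumFinEquiv).trans finSumFinEquiv with hτ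
  set e : Fin n ≃ Fin (s + b + c) :=
    ((Equiv.sumCompl (fun v : Fin n => v ∈ S)).symm.trans
      ((Equiv.sumCongr eS e2).trans (τ.trans (finCongr (by omega))))) with he
  refine ⟨e, ?_, ?_⟩
  · intro v hv
    have h1 : (Equiv.sumCompl (fun v : Fin n => v ∈ S)).symm v = Sum.inl ⟨v, hv⟩ :=
      Equiv.sumCompl_symm_apply_of_pos hv
    have hev : e v = finCongr (by omega : s + (b + c) = s + b + c)
        (τ (Sum.inl (eS ⟨v, hv⟩))) := by
      rw [he]
      simp only [Equiv.trans_apply, h1, Equiv.sumCongr_apply, Sum.map_inl]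
    rw [hev, hτ]
    simp only [Equiv.trans_apply, Equiv.sumCongr_apply, Sum.map_inl, Equiv.refl_apply,
      finSumFinEquiv_apply_left, finCongr_apply, Fin.coe_cast, Fin.coe_castAdd]
    exact (eS ⟨v, hv⟩).isLt
  · intro v hv
    rw [Finset.mem_sdiff, Finset.mem_sdiff] at hv
    obtain ⟨⟨-, hvS⟩, hvI⟩ := hv
    have h1 : (Equiv.sumCompl (fun v : Fin n => v ∈ S)).symm v = Sum.inr ⟨v, hvS⟩ :=
      Equiv.sumCompl_symm_apply_of_neg hvS
    have h2 : (Equiv.sumCompl (fun x : {v : Fin n // v ∉ S} => (x : Fin n) ∈ I')).symm ⟨v, hvS⟩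
        = Sum.inr ⟨⟨v, hvS⟩, hvI⟩ :=
      Equiv.sumCompl_symm_apply_of_neg
        (p := fun x : {v : Fin n // v ∉ S} => (x : Fin n) ∈ I') (a := ⟨v, hvS⟩) hvI
    have hev : e v = finCongr (by omega : s + (b + c) = s + b + c)
        (τ (Sum.inr (Sum.inl (eR ⟨⟨v, hvS⟩, hvI⟩)))) := by
      rw [he]
      simp only [Equiv.trans_apply, h1, Equiv.sumCongr_apply, Sum.map_inr, he2, h2,
        Equiv.sumComm_apply, Sum.swap_inr]
    rw [hev, hτ]
    simp only [Equiv.trans_apply, Equiv.sumCongr_apply, Sum.map_inr,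
      finSumFinEquiv_apply_left, finSumFinEquiv_apply_right, finCongr_apply, Fin.coe_cast,
      Fin.coe_natAdd, Fin.coe_castAdd]
    have := (eR ⟨⟨v, hvS⟩, hvI⟩).isLt
    omega

end Aux17j
/-- If `G` has order `n`, minimum degree `δ` and `μ_f(G) ≤ (n−k)/2` (`k > 0`), then
there is an integer `s` with `δ ≤ s ≤ (n−k)/2` such that `G` is a spanning subgraph of
`K_s ∨ (K_{n−2s−k} + (s+k)K_1)`; consequently `ρ(G) ≤ ρ(K_s ∨ (K_{n−2s−k} + (s+k)K_1))`
with equality if and only if `G ≅ K_s ∨ (K_{n−2s−k} + (s+k)K_1)`. -/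
theorem stmt17 (n k δ : ℕ) (hk : 0 < k)
    (G : SimpleGraph (Fin n)) [DecidableRel G.Adj] (hδ : G.minDegree = δ)
    (hμ : fracNu G ≤ ((n : ℝ) - k) / 2) :
    ∃ s : ℕ, δ ≤ s ∧ 2 * s + k ≤ n ∧
      (∃ e : Fin n ≃ Fin (s + (n - 2 * s - k) + (s + k)),
        ∀ u v : Fin n, G.Adj u v → (jGraph s (n - 2 * s - k) (s + k)).Adj (e u) (e v)) ∧
      specRad G ≤ specRad (jGraph s (n - 2 * s - k) (s + k)) ∧
      (specRad G = specRad (jGraph s (n - 2 * s - k) (s + k)) ↔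
        Nonempty (G ≃g jGraph s (n - 2 * s - k) (s + k))) := by
  have hn : 0 < n := by
    have h0 := fracNu_nonneg G
    have h1 : (k:ℝ) ≤ n := by linarith
    have h2 : k ≤ n := by exact_mod_cast h1
    omega
  obtain ⟨S, I, hdisj, hcard, hnb⟩ := existsSI hk G hμ
  have hIne : I.Nonempty := Finset.card_pos.mp (by omega)
  obtain ⟨v0, hv0⟩ := hIne
  haveI : Nonempty (Fin n) := ⟨⟨0, hn⟩⟩
  have hδs : δ ≤ S.card := by
    rw [← hδ]
    calc G.minDegree ≤ G.degree v0 := G.minDegree_le_degree v0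
      _ ≤ S.card := by
        apply Finset.card_le_card
        intro u hu
        exact hnb v0 hv0 u ((SimpleGraph.mem_neighborFinset G v0 u).mp hu)
  have hSI : S.card + I.card ≤ n := by
    calc S.card + I.card = (S ∪ I).card := (Finset.card_union_of_disjoint hdisj).symm
      _ ≤ (Finset.univ : Finset (Fin n)).card := Finset.card_le_card (Finset.subset_univ _)
      _ = n := by simp
  have h2sk : 2 * S.card + k ≤ n := by omega
  obtain ⟨I', hI'sub, hI'card⟩ := Finset.exists_subset_card_eq (s := I) (n := S.card + k) (by omega)
  have hdisj' : Disjoint S I' := hdisj.mono_right hI'sub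
  have hbR : ((Finset.univ \ S) \ I').card = n - 2 * S.card - k := by
    have h1 : I' ⊆ Finset.univ \ S := by
      intro x hx
      rw [Finset.mem_sdiff]
      exact ⟨Finset.mem_univ x, fun hc => (Finset.disjoint_left.mp hdisj') hc hx⟩
    rw [Finset.card_sdiff_of_subset h1, Finset.card_sdiff_of_subset (Finset.subset_univ S), hI'card]
    rw [Finset.card_univ, Fintype.card_fin]
    omega
  obtain ⟨e, heS, heR⟩ := partition_equiv S I' hdisj' rfl hI'card hbR (by omega)
  have hsub : ∀ u v, G.Adj u v →
      (jGraph S.card (n - 2 * S.card - k) (S.card + k)).Adj (e u) (e v) := by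
    intro u v huv
    rw [jAdj]
    refine ⟨fun hc => huv.ne (e.injective hc), ?_⟩
    by_cases hu : u ∈ I'
    · have hvS : v ∈ S := hnb u (hI'sub hu) v huv
      right; left; exact heS v hvS
    · by_cases hv : v ∈ I'
      · have huS : u ∈ S := hnb v (hI'sub hv) u huv.symm
        left; left; exact heS u huS
      · have hub : ((e u : Fin _) : ℕ) < S.card + (n - 2 * S.card - k) := by
          by_cases huS : u ∈ S
          · exact lt_of_lt_of_le (heS u huS) (Nat.le_add_right _ _)
          · apply heR
            rw [Finset.mem_sdiff, Finset.mem_sdiff]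
            exact ⟨⟨Finset.mem_univ _, huS⟩, hu⟩
        have hvb : ((e v : Fin _) : ℕ) < S.card + (n - 2 * S.card - k) := by
          by_cases hvS : v ∈ S
          · exact lt_of_lt_of_le (heS v hvS) (Nat.le_add_right _ _)
          · apply heR
            rw [Finset.mem_sdiff, Finset.mem_sdiff]
            exact ⟨⟨Finset.mem_univ _, hvS⟩, hv⟩
        left; right; exact ⟨hub, hvb⟩
  have hmain := main_spec hn G e hsub
  exact ⟨S.card, hδs, h2sk, ⟨e, hsub⟩, hmain.1, hmain.2⟩
end
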